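/- arXiv:2210.09578 — 7 statements merged into one kernel-verified Lean document; each statement's English description precedes it below -/
import Mathlib

section
/- Under Assumptions (1)–(3), let P be a symmetric positive semidefinite p×p matrix satisfying the algebraic Riccati equation P = T P (I_p − K Z)ᵀ Tᵀ + Σ_η, where K = P Zᵀ (Z P Zᵀ + Σ_ε)⁻¹ (in particular the limit of the Riccati-type recursion). Then every complex eigenvalue λ of the p×p matrix T (I_p − K Z) satisfies |λ| < 1. -/
open Matrix

open scoped ComplexOrder

set_option linter.unusedSectionVars false
set_option maxHeartbeats 1000000

namespace KalmanAux

variable {a b c : Type*} [Fintype a] [Fintype b] [Fintype c]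

lemma mapC_mul (M : Matrix a b ℝ) (N : Matrix b c ℝ) :
    (M * N).map Complex.ofReal = M.map Complex.ofReal * N.map Complex.ofReal := by
  ext i j; simp [Matrix.mul_apply]

lemma mapC_conjT (M : Matrix a b ℝ) :
    (M.map Complex.ofReal)ᴴ = Mᵀ.map Complex.ofReal := by
  ext i j; simp [conjTranspose_apply, Complex.conj_ofReal]

lemma mapC_add (M N : Matrix a b ℝ) :
    (M + N).map Complex.ofReal = M.map Complex.ofReal + N.map Complex.ofReal := by
  ext i j; simp

lemma mapC_sub (M N : Matrix a b ℝ) :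
    (M - N).map Complex.ofReal = M.map Complex.ofReal - N.map Complex.ofReal := by
  ext i j; simp

variable {n : Type*} [Fintype n] [DecidableEq n]

lemma mapC_one : (1 : Matrix n n ℝ).map Complex.ofReal = 1 := by
  ext i j; by_cases h : i = j <;> simp [Matrix.one_apply, h]

lemma mapC_pow (M : Matrix n n ℝ) (k : ℕ) :
    (M ^ k).map Complex.ofReal = (M.map Complex.ofReal) ^ k := by
  induction k with
  | zero => simpa using mapC_one
  | succ k ih => rw [pow_succ, pow_succ, mapC_mul, ih]

open scoped MatrixOrder Matrix.Norms.L2Operator in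
lemma psd_mapC {M : Matrix n n ℝ} (h : M.PosSemidef) :
    (M.map Complex.ofReal).PosSemidef := by
  classical
  obtain ⟨B, rfl⟩ : ∃ B : Matrix n n ℝ, M = Bᴴ * B := CStarAlgebra.nonneg_iff_eq_star_mul_self.mp h.nonneg
  rw [mapC_mul, show (Bᴴ).map Complex.ofReal = (B.map Complex.ofReal)ᴴ by
    ext i j; simp [conjTranspose_apply, Complex.conj_ofReal]]
  exact Matrix.posSemidef_conjTranspose_mul_self _

lemma det_mapC (M : Matrix n n ℝ) :
    (M.map Complex.ofReal).det = Complex.ofReal M.det := by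
  rw [show M.map Complex.ofReal = Complex.ofRealHom.mapMatrix M from rfl,
    ← RingHom.map_det]
  rfl

lemma isUnit_mapC {M : Matrix n n ℝ} (h : IsUnit M.det) :
    IsUnit (M.map Complex.ofReal) := by
  rw [Matrix.isUnit_iff_isUnit_det, det_mapC, isUnit_iff_ne_zero]
  exact_mod_cast h.ne_zero ∘ (by exact_mod_cast ·)

lemma posDef_mapC {M : Matrix n n ℝ} (h : M.PosDef) :
    (M.map Complex.ofReal).PosDef := by
  have hpsd := psd_mapC h.posSemidef
  refine .of_dotProduct_mulVec_pos hpsd.1 fun x hx => ?_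
  refine lt_of_le_of_ne (hpsd.dotProduct_mulVec_nonneg x) fun h0 => hx ?_
  have hv := (hpsd.dotProduct_mulVec_zero_iff x).mp h0.symm
  have hu : IsUnit (M.map Complex.ofReal) := isUnit_mapC h.det_pos.ne'.isUnit
  have := Matrix.mulVec_injective_iff_isUnit.mpr hu
  have := this (a₁ := x) (a₂ := 0) (by simpa using hv)
  exact this

lemma isUnit_of_rank_eq_card {K : Type*} [Field K] (A : Matrix n n K)
    (h : A.rank = Fintype.card n) : IsUnit A := by
  rw [← Matrix.mulVec_injective_iff_isUnit]
  have hr : LinearMap.range A.mulVecLin = ⊤ := by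
    apply Submodule.eq_top_of_finrank_eq
    rw [← Matrix.rank, h, Module.finrank_pi]
  have hsurj : Function.Surjective A.mulVecLin := LinearMap.range_eq_top.mp hr
  have hinj : Function.Injective A.mulVecLin :=
    (LinearMap.injective_iff_surjective).mpr hsurj
  simpa [Function.Injective] using hinj

lemma quad_conj (B : Matrix n a ℂ) (S : Matrix a a ℂ) (v : n → ℂ) :
    star v ⬝ᵥ (B * S * Bᴴ) *ᵥ v = star (Bᴴ *ᵥ v) ⬝ᵥ S *ᵥ (Bᴴ *ᵥ v) := by
  rw [← mulVec_mulVec, ← mulVec_mulVec, dotProduct_mulVec, star_mulVec,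
    conjTranspose_conjTranspose, ← dotProduct_mulVec]

lemma key_identity {p d : ℕ}
    (Z : Matrix (Fin d) (Fin p) ℝ) (T : Matrix (Fin p) (Fin p) ℝ)
    (Sε : Matrix (Fin d) (Fin d) ℝ) (Sη : Matrix (Fin p) (Fin p) ℝ)
    (hSε : Sε.PosDef)
    (P : Matrix (Fin p) (Fin p) ℝ) (K : Matrix (Fin p) (Fin d) ℝ)
    (hP : P.PosSemidef)
    (hK : K = P * Zᵀ * (Z * P * Zᵀ + Sε)⁻¹)
    (hARE : P = T * P * (1 - K * Z)ᵀ * Tᵀ + Sη) :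
    P = (T * (1 - K * Z)) * P * (T * (1 - K * Z))ᵀ + (T * K) * Sε * (T * K)ᵀ + Sη := by
  have hPt : Pᵀ = P := hP.1
  have hZH : Zᴴ = Zᵀ := by ext i j; simp [conjTranspose_apply]
  set S := Z * P * Zᵀ + Sε with hS
  have hSpd : S.PosDef := by
    have h1 : (Z * P * Zᵀ).PosSemidef := by
      have := hP.mul_mul_conjTranspose_same Z
      rwa [hZH] at this
    exact Matrix.PosDef.posSemidef_add h1 hSε
  have hdet : IsUnit S.det := hSpd.det_pos.ne'.isUnit
  have hSt : Sᵀ = S := by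
    rw [hS, transpose_add, transpose_mul, transpose_mul, transpose_transpose, hPt,
      hSε.1.eq.symm, ← hZH]
    rw [hSε.1]
    rw [Matrix.mul_assoc]
    have : Sεᴴ = Sεᵀ := by ext i j; simp [conjTranspose_apply]
    rw [← this, hSε.1]
  have hSinvT : S⁻¹ᵀ = S⁻¹ := by rw [transpose_nonsing_inv, hSt]
  have h1 : K * S = P * Zᵀ := by
    rw [hK, Matrix.mul_assoc, Matrix.nonsing_inv_mul S hdet, Matrix.mul_one]
  have hKT : Kᵀ = S⁻¹ * (Z * P) := by
    rw [hK, transpose_mul, transpose_mul, hSinvT, transpose_transpose, hPt]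
  have h2 : K * (Z * P) = P * (Zᵀ * Kᵀ) := by
    rw [hKT, hK]
    simp only [Matrix.mul_assoc]
  have h3 : K * Sε = P * Zᵀ - K * (Z * P * Zᵀ) := by
    have := h1
    rw [hS, Matrix.mul_add] at this
    rw [← this]; abel
  have middle : P * (1 - K * Z)ᵀ = (1 - K * Z) * P * (1 - K * Z)ᵀ + K * Sε * Kᵀ := by
    rw [transpose_sub, transpose_one, transpose_mul, h3]
    simp only [Matrix.sub_mul, Matrix.mul_sub, Matrix.mul_one, Matrix.one_mul, Matrix.mul_assoc]
    rw [h2]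
    abel
  calc P = T * P * (1 - K * Z)ᵀ * Tᵀ + Sη := hARE
    _ = T * (P * (1 - K * Z)ᵀ) * Tᵀ + Sη := by rw [Matrix.mul_assoc T P]
    _ = _ := by
        rw [middle]
        simp only [transpose_mul, Matrix.mul_add, Matrix.add_mul, Matrix.mul_assoc]

end KalmanAux

open KalmanAux

/-- Under Assumptions (1)–(3), if `P` is a symmetric positive semidefinite
solution of the algebraic Riccati equation `P = T P (I − K Z)ᵀ Tᵀ + Ση` with
`K = P Zᵀ (Z P Zᵀ + Σε)⁻¹`, then every complex eigenvalue `λ` of `T (I − K Z)`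
satisfies `|λ| < 1`. -/
theorem eigenvalues_TL_lt_one
    {p d r₀ : ℕ}
    (Z : Matrix (Fin d) (Fin p) ℝ) (T : Matrix (Fin p) (Fin p) ℝ)
    (Sε : Matrix (Fin d) (Fin d) ℝ) (Sη : Matrix (Fin p) (Fin p) ℝ)
    (R : Matrix (Fin p) (Fin r₀) ℝ) (Q : Matrix (Fin r₀) (Fin r₀) ℝ)
    -- Assumption (1)
    (hSε : Sε.PosDef)
    -- Assumption (2): observability
    (hobs : (Matrix.of fun (ki : Fin p × Fin d) (j : Fin p) =>
      (Z * T ^ (ki.1 : ℕ)) ki.2 j).rank = p)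
    -- Assumption (3): controllability
    (hSη : Sη = R * Q * Rᵀ) (hQ : Q.PosDef)
    (hctr : (Matrix.of fun (i : Fin p) (kj : Fin p × Fin r₀) =>
      (T ^ (kj.1 : ℕ) * R) i kj.2).rank = p)
    -- the algebraic Riccati equation
    (P : Matrix (Fin p) (Fin p) ℝ) (K : Matrix (Fin p) (Fin d) ℝ)
    (hP : P.PosSemidef)
    (hK : K = P * Zᵀ * (Z * P * Zᵀ + Sε)⁻¹)
    (hARE : P = T * P * (1 - K * Z)ᵀ * Tᵀ + Sη) :
    ∀ lam ∈ spectrum ℂ ((T * (1 - K * Z)).map (Complex.ofReal)), ‖lam‖ < 1 := by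

  intro lam hlam
  by_contra hcon
  push_neg at hcon
  set A : Matrix (Fin p) (Fin p) ℂ := (T * (1 - K * Z)).map Complex.ofReal with hA
  -- extract an eigenvector of Aᴴ for conj lam
  have hnu : ¬ IsUnit (algebraMap ℂ (Matrix (Fin p) (Fin p) ℂ) lam - A) :=
    spectrum.mem_iff.mp hlam
  have hdet0 : (algebraMap ℂ (Matrix (Fin p) (Fin p) ℂ) lam - A).det = 0 := by
    by_contra h
    exact hnu ((Matrix.isUnit_iff_isUnit_det _).mpr (isUnit_iff_ne_zero.mpr h))
  have hdetH : ((algebraMap ℂ (Matrix (Fin p) (Fin p) ℂ) lam - A)ᴴ).det = 0 := by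
    rw [Matrix.det_conjTranspose, hdet0, star_zero]
  obtain ⟨v, hv0, hvz⟩ := (Matrix.exists_mulVec_eq_zero_iff).mpr hdetH
  have hAv : Aᴴ *ᵥ v = (starRingEnd ℂ) lam • v := by
    rw [conjTranspose_sub, sub_mulVec, sub_eq_zero] at hvz
    rw [← hvz]
    simp [Algebra.algebraMap_eq_smul_one, conjTranspose_smul, smul_mulVec]
  -- complexified matrices
  set P' : Matrix (Fin p) (Fin p) ℂ := P.map Complex.ofReal with hP'
  set B₁ : Matrix (Fin p) (Fin d) ℂ := (T * K).map Complex.ofReal with hB₁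
  set R' : Matrix (Fin p) (Fin r₀) ℂ := R.map Complex.ofReal with hR'
  set Sε' : Matrix (Fin d) (Fin d) ℂ := Sε.map Complex.ofReal with hSε'
  set Q' : Matrix (Fin r₀) (Fin r₀) ℂ := Q.map Complex.ofReal with hQ'
  have hkey := key_identity Z T Sε Sη hSε P K hP hK hARE
  rw [hSη] at hkey
  have hkeyC : P' = A * P' * Aᴴ + B₁ * Sε' * B₁ᴴ + R' * Q' * R'ᴴ := by
    rw [hP', hA, hB₁, hR', hSε', hQ']
    rw [mapC_conjT, mapC_conjT, mapC_conjT]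
    conv_lhs => rw [hkey]
    simp only [mapC_add, mapC_mul]
  -- quadratic forms
  set u₁ : Fin d → ℂ := B₁ᴴ *ᵥ v with hu₁
  set u₂ : Fin r₀ → ℂ := R'ᴴ *ᵥ v with hu₂
  set aq : ℂ := star v ⬝ᵥ P' *ᵥ v with haq
  set m₁ : ℂ := star u₁ ⬝ᵥ Sε' *ᵥ u₁ with hm₁
  set m₂ : ℂ := star u₂ ⬝ᵥ Q' *ᵥ u₂ with hm₂
  have hquad : aq = (Complex.normSq lam : ℂ) * aq + m₁ + m₂ := by
    conv_lhs => rw [haq, hkeyC]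
    rw [add_mulVec, add_mulVec, dotProduct_add, dotProduct_add,
      quad_conj, quad_conj, quad_conj, hAv]
    congr 1
    congr 1
    rw [star_smul, smul_dotProduct, mulVec_smul, dotProduct_smul]
    simp only [Complex.star_def, ← haq, smul_eq_mul]
    rw [Complex.conj_conj]
    rw [← mul_assoc, Complex.mul_conj]
  -- positivity
  have hpsdP : P'.PosSemidef := psd_mapC hP
  have hpdSε : Sε'.PosDef := posDef_mapC hSε
  have hpdQ : Q'.PosDef := posDef_mapC hQ
  have ha : 0 ≤ aq := hpsdP.dotProduct_mulVec_nonneg v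
  have hm1 : 0 ≤ m₁ := hpdSε.posSemidef.dotProduct_mulVec_nonneg u₁
  have hm2 : 0 ≤ m₂ := hpdQ.posSemidef.dotProduct_mulVec_nonneg u₂
  have haim : aq.im = 0 := by simpa using (Complex.le_def.mp ha).2.symm
  have hm1im : m₁.im = 0 := by simpa using (Complex.le_def.mp hm1).2.symm
  have hm2im : m₂.im = 0 := by simpa using (Complex.le_def.mp hm2).2.symm
  have hare : 0 ≤ aq.re := by simpa using (Complex.le_def.mp ha).1
  have hm1re0 : 0 ≤ m₁.re := by simpa using (Complex.le_def.mp hm1).1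
  have hm2re0 : 0 ≤ m₂.re := by simpa using (Complex.le_def.mp hm2).1
  have hn : 1 ≤ Complex.normSq lam := by
    rw [Complex.normSq_eq_norm_sq]; nlinarith
  have hre := congrArg Complex.re hquad
  simp only [Complex.add_re, Complex.mul_re, Complex.ofReal_re, Complex.ofReal_im,
    haim, mul_zero, zero_mul, sub_zero] at hre
  have hm1re : m₁.re = 0 := by nlinarith
  have hm2re : m₂.re = 0 := by nlinarith
  have hm1z : m₁ = 0 := Complex.ext hm1re hm1im
  have hm2z : m₂ = 0 := Complex.ext hm2re hm2im
  have hu₁0 : u₁ = 0 := by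
    by_contra h
    have hlt := hpdSε.dotProduct_mulVec_pos h
    rw [← hm₁, hm1z] at hlt
    exact lt_irrefl 0 hlt
  have hu₂0 : u₂ = 0 := by
    by_contra h
    have hlt := hpdQ.dotProduct_mulVec_pos h
    rw [← hm₂, hm2z] at hlt
    exact lt_irrefl 0 hlt
  -- v is a left eigenvector of T
  have hTv : (Tᵀ.map Complex.ofReal) *ᵥ v = (starRingEnd ℂ) lam • v := by
    have hAH : Aᴴ = ((1 - K*Z)ᵀ.map Complex.ofReal) * (Tᵀ.map Complex.ofReal) := by
      rw [hA, mapC_mul, conjTranspose_mul, mapC_conjT, mapC_conjT]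
    have hexp : (1 - K*Z)ᵀ.map Complex.ofReal
        = 1 - (Zᵀ.map Complex.ofReal) * (Kᵀ.map Complex.ofReal) := by
      rw [transpose_sub, transpose_one, transpose_mul, mapC_sub, mapC_one, mapC_mul]
    have h0 : (Kᵀ.map Complex.ofReal) *ᵥ ((Tᵀ.map Complex.ofReal) *ᵥ v) = 0 := by
      rw [mulVec_mulVec, ← mapC_mul, ← transpose_mul]
      have hb : (T*K)ᵀ.map Complex.ofReal = B₁ᴴ := by rw [hB₁, mapC_conjT]
      rw [hb, ← hu₁, hu₁0]
    have hv' := hAv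
    rw [hAH, ← mulVec_mulVec, hexp, sub_mulVec, one_mulVec, ← mulVec_mulVec, h0,
      mulVec_zero, sub_zero] at hv'
    exact hv'
  -- powers
  have hpow : ∀ k : ℕ, ((Tᵀ.map Complex.ofReal) ^ k) *ᵥ v
      = ((starRingEnd ℂ) lam) ^ k • v := by
    intro k; induction k with
    | zero => simp
    | succ k ih =>
      rw [pow_succ, ← mulVec_mulVec, hTv, mulVec_smul, ih, smul_smul, pow_succ, mul_comm]
  have hRv : (Rᵀ.map Complex.ofReal) *ᵥ v = 0 := by
    have hb : Rᵀ.map Complex.ofReal = R'ᴴ := by rw [hR', mapC_conjT]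
    rw [hb, ← hu₂, hu₂0]
  have hcols : ∀ k : ℕ, (((T^k * R)ᵀ).map Complex.ofReal) *ᵥ v = 0 := by
    intro k
    rw [transpose_mul, mapC_mul, ← mulVec_mulVec, transpose_pow, mapC_pow, hpow,
      mulVec_smul, hRv, smul_zero]
  -- controllability matrix kills star v
  set Cm : Matrix (Fin p) (Fin p × Fin r₀) ℝ :=
    Matrix.of fun i kj => (T ^ (kj.1:ℕ) * R) i kj.2 with hCm
  have hCv : ((Cmᵀ).map Complex.ofReal) *ᵥ v = 0 := by
    ext kj
    obtain ⟨k, j⟩ := kj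
    have hc := congrFun (hcols k) j
    have he : ∀ x, ((T ^ (k:ℕ) * R) x j : ℝ) = (Rᵀ * Tᵀ ^ (k:ℕ)) j x := fun x => by
      rw [← transpose_pow, ← transpose_mul, transpose_apply]
    simpa [mulVec, dotProduct, Matrix.map_apply, transpose_apply, hCm, he] using hc
  have hCw : ((Cmᵀ).map Complex.ofReal) *ᵥ (star v) = 0 := by
    have hsw : ((Cmᵀ).map Complex.ofReal) *ᵥ (star v)
        = star (((Cmᵀ).map Complex.ofReal) *ᵥ v) := by
      ext kj
      simp [mulVec, dotProduct, Matrix.map_apply, Complex.conj_ofReal, mul_comm]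
    rw [hsw, hCv, star_zero]
  have hGu : IsUnit ((Cm * Cmᵀ).map Complex.ofReal) := by
    apply isUnit_mapC
    rw [← Matrix.isUnit_iff_isUnit_det]
    apply isUnit_of_rank_eq_card
    rw [Matrix.rank_self_mul_transpose]
    simpa using hctr
  have hsv : star v = (0 : Fin p → ℂ) := by
    have hinj := Matrix.mulVec_injective_iff_isUnit.mpr hGu
    apply hinj
    rw [mapC_mul, ← mulVec_mulVec, hCw, mulVec_zero, mulVec_zero]
  exact hv0 (by simpa using congrArg star hsv)
end

section
/- In the time-varying misspecified Kalman setting, for every t ≥ 1 one has the identity E[a_{t+1} − a'_{t+1}] = T_t L'_t · E[a_t − a'_t], where the expectations are the (componentwise) means of the ℝ^p-valued random vectors. -/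
open Matrix MeasureTheory

/-- The continuous linear map given by matrix-vector multiplication. -/
noncomputable def mvCLM {d p : ℕ} (M : Matrix (Fin d) (Fin p) ℝ) :
    (Fin p → ℝ) →L[ℝ] (Fin d → ℝ) :=
  LinearMap.toContinuousLinearMap M.mulVecLin

lemma mvCLM_apply {d p : ℕ} (M : Matrix (Fin d) (Fin p) ℝ) (v : Fin p → ℝ) :
    mvCLM M v = M.mulVec v := rfl

/-- In the time-varying misspecified Kalman setting, for every `t ≥ 1`,
`E[a_{t+1} − a'_{t+1}] = T_t L'_t E[a t − a'_t]` (componentwise expectations). -/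
theorem mean_diff_recursion
    {Ω : Type*} {m0 : MeasurableSpace Ω} (μ : Measure Ω) [IsProbabilityMeasure μ]
    (ℱ : Filtration ℕ m0) (hℱ0 : ℱ 0 = ⊥)
    {d p : ℕ}
    (Z : ℕ → Matrix (Fin d) (Fin p) ℝ) (T : ℕ → Matrix (Fin p) (Fin p) ℝ)
    (K K' : ℕ → Matrix (Fin p) (Fin d) ℝ)
    (L' : ℕ → Matrix (Fin p) (Fin p) ℝ)
    (hL' : ∀ t, L' t = 1 - K' t * Z t)
    (y : ℕ → Ω → Fin d → ℝ)
    (hy_meas : ∀ t, StronglyMeasurable[ℱ t] (y t))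
    (hy_L2 : ∀ t, MemLp (y t) 2 μ)
    (a a' : ℕ → Ω → Fin p → ℝ)
    (a₁ a₁' : Fin p → ℝ)
    (ha1 : ∀ ω, a 1 ω = a₁) (ha1' : ∀ ω, a' 1 ω = a₁')
    (ha : ∀ t, 1 ≤ t → ∀ ω,
      a (t + 1) ω = (T t).mulVec (a t ω)
        + (T t).mulVec ((K t).mulVec (y t ω - (Z t).mulVec (a t ω))))
    (ha' : ∀ t, 1 ≤ t → ∀ ω,
      a' (t + 1) ω = (T t).mulVec (a' t ω)
        + (T t).mulVec ((K' t).mulVec (y t ω - (Z t).mulVec (a' t ω))))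
    (ha_L2 : ∀ t, MemLp (a t) 2 μ) (ha'_L2 : ∀ t, MemLp (a' t) 2 μ)
    (hcond : ∀ t, 1 ≤ t → μ[y t | ℱ (t - 1)] =ᵐ[μ] fun ω => (Z t).mulVec (a t ω)) :
    ∀ t, 1 ≤ t →
      (fun i => ∫ ω, (a (t + 1) ω i - a' (t + 1) ω i) ∂μ)
        = (T t * L' t).mulVec (fun i => ∫ ω, (a t ω i - a' t ω i) ∂μ) := by
  intro t ht
  -- integrability
  have hy_int : Integrable (y t) μ := (hy_L2 t).integrable one_le_two
  have ha_int : ∀ s, Integrable (a s) μ := fun s => (ha_L2 s).integrable one_le_two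
  have ha'_int : ∀ s, Integrable (a' s) μ := fun s => (ha'_L2 s).integrable one_le_two
  have hZa_int : ∀ (M : Matrix (Fin d) (Fin p) ℝ) (s : ℕ),
      Integrable (fun ω => M.mulVec (a s ω)) μ := fun M s =>
    (mvCLM M).integrable_comp (ha_int s)
  -- key expectation identity: ∫ y t = Z t · ∫ a t
  have hEy : ∫ ω, y t ω ∂μ = (Z t).mulVec (∫ ω, a t ω ∂μ) := by
    have h1 : ∫ ω, (μ[y t|ℱ (t - 1)]) ω ∂μ = ∫ ω, y t ω ∂μ :=
      integral_condExp (ℱ.le (t - 1))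
    have h2 : ∫ ω, (μ[y t|ℱ (t - 1)]) ω ∂μ = ∫ ω, (Z t).mulVec (a t ω) ∂μ :=
      integral_congr_ae (hcond t ht)
    have h3 : ∫ ω, (Z t).mulVec (a t ω) ∂μ = (Z t).mulVec (∫ ω, a t ω ∂μ) := by
      simpa [mvCLM_apply] using
        ((mvCLM (Z t)).integral_comp_comm (ha_int t))
    rw [← h1, h2, h3]
  -- abbreviations
  set D : Fin p → ℝ := ∫ ω, (fun ω => a t ω - a' t ω) ω ∂μ with hD
  have hdiff_int : Integrable (fun ω => a t ω - a' t ω) μ := (ha_int t).sub (ha'_int t)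
  have hDsplit : D = (∫ ω, a t ω ∂μ) - ∫ ω, a' t ω ∂μ :=
    integral_sub (ha_int t) (ha'_int t)
  -- pointwise decomposition of the difference
  have hpw : ∀ ω, a (t + 1) ω - a' (t + 1) ω
      = mvCLM (T t) (a t ω - a' t ω)
        + mvCLM (T t * K t) (y t ω - (Z t).mulVec (a t ω))
        - mvCLM (T t * K' t) (y t ω - (Z t).mulVec (a' t ω)) := by
    intro ω
    rw [ha t ht ω, ha' t ht ω]
    simp only [mvCLM_apply, ← mulVec_mulVec, Matrix.mulVec_sub, Matrix.mulVec_add]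
    abel
  -- integrability of pieces
  have hi1 : Integrable (fun ω => mvCLM (T t) (a t ω - a' t ω)) μ :=
    (mvCLM (T t)).integrable_comp hdiff_int
  have hv_int : Integrable (fun ω => y t ω - (Z t).mulVec (a t ω)) μ :=
    hy_int.sub (hZa_int _ t)
  have hZa'_int : Integrable (fun ω => (Z t).mulVec (a' t ω)) μ :=
    (mvCLM (Z t)).integrable_comp (ha'_int t)
  have hv'_int : Integrable (fun ω => y t ω - (Z t).mulVec (a' t ω)) μ :=
    hy_int.sub hZa'_int
  have hi2 : Integrable (fun ω => mvCLM (T t * K t) (y t ω - (Z t).mulVec (a t ω))) μ :=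
    (mvCLM (T t * K t)).integrable_comp hv_int
  have hi3 : Integrable (fun ω => mvCLM (T t * K' t) (y t ω - (Z t).mulVec (a' t ω))) μ :=
    (mvCLM (T t * K' t)).integrable_comp hv'_int
  -- integrals of the innovation terms
  have hIv : ∫ ω, (y t ω - (Z t).mulVec (a t ω)) ∂μ = 0 := by
    rw [integral_sub hy_int (hZa_int _ t), hEy]
    have : ∫ ω, (Z t).mulVec (a t ω) ∂μ = (Z t).mulVec (∫ ω, a t ω ∂μ) := by
      simpa [mvCLM_apply] using ((mvCLM (Z t)).integral_comp_comm (ha_int t))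
    rw [this, sub_self]
  have hIv' : ∫ ω, (y t ω - (Z t).mulVec (a' t ω)) ∂μ = (Z t).mulVec D := by
    rw [integral_sub hy_int hZa'_int, hEy]
    have : ∫ ω, (Z t).mulVec (a' t ω) ∂μ = (Z t).mulVec (∫ ω, a' t ω ∂μ) := by
      simpa [mvCLM_apply] using ((mvCLM (Z t)).integral_comp_comm (ha'_int t))
    rw [this, hDsplit, ← Matrix.mulVec_sub]
  -- the vector-level identity
  have hvec : ∫ ω, (a (t + 1) ω - a' (t + 1) ω) ∂μ = (T t * L' t).mulVec D := by
    calc ∫ ω, (a (t + 1) ω - a' (t + 1) ω) ∂μ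
        = ∫ ω, (mvCLM (T t) (a t ω - a' t ω)
            + mvCLM (T t * K t) (y t ω - (Z t).mulVec (a t ω))
            - mvCLM (T t * K' t) (y t ω - (Z t).mulVec (a' t ω))) ∂μ := by
          exact integral_congr_ae (Filter.Eventually.of_forall hpw)
      _ = mvCLM (T t) D + mvCLM (T t * K t) (∫ ω, (y t ω - (Z t).mulVec (a t ω)) ∂μ)
            - mvCLM (T t * K' t) (∫ ω, (y t ω - (Z t).mulVec (a' t ω)) ∂μ) := by
          have hi12 : Integrable (fun ω => mvCLM (T t) (a t ω - a' t ω)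
              + mvCLM (T t * K t) (y t ω - (Z t).mulVec (a t ω))) μ := hi1.add hi2
          rw [integral_sub hi12 hi3, integral_add hi1 hi2,
            (mvCLM (T t)).integral_comp_comm hdiff_int,
            (mvCLM (T t * K t)).integral_comp_comm hv_int,
            (mvCLM (T t * K' t)).integral_comp_comm hv'_int]
      _ = (T t * L' t).mulVec D := by
          rw [hIv, hIv']
          simp only [mvCLM_apply, map_zero, add_zero, mulVec_mulVec, hL' t]
          rw [Matrix.mul_sub, Matrix.mul_one, Matrix.sub_mulVec, ← Matrix.mul_assoc]
  -- pass from componentwise integrals to the vector integral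
  have hcomp : ∀ {q : ℕ} (f : Ω → Fin q → ℝ), Integrable f μ →
      (fun i => ∫ ω, f ω i ∂μ) = ∫ ω, f ω ∂μ := by
    intro q f hf
    funext i
    exact ((ContinuousLinearMap.proj (R := ℝ) (φ := fun _ : Fin q => ℝ) i).integral_comp_comm hf)
  have h1 : (fun i => ∫ ω, (a (t + 1) ω i - a' (t + 1) ω i) ∂μ)
      = ∫ ω, (a (t + 1) ω - a' (t + 1) ω) ∂μ := by
    have := hcomp (fun ω => a (t + 1) ω - a' (t + 1) ω) ((ha_int (t + 1)).sub (ha'_int (t + 1)))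
    simpa using this
  have h2 : (fun i => ∫ ω, (a t ω i - a' t ω i) ∂μ) = D := by
    have := hcomp (fun ω => a t ω - a' t ω) hdiff_int
    simpa [hD] using this
  rw [h1, h2, hvec]
end

section
/- In the time-varying misspecified Kalman setting, assume additionally that for every t there is a deterministic d×d matrix F_t with E[v_t v_tᵀ | 𝔉_{t−1}] = F_t almost surely. Then for every t ≥ 1: E[(a_{t+1} − a'_{t+1})(a_{t+1} − a'_{t+1})ᵀ] = T_t (K_t − K'_t) F_t (K_t − K'_t)ᵀ T_tᵀ + T_t L'_t · E[(a_t − a'_t)(a_t − a'_t)ᵀ] · L'_tᵀ T_tᵀ. -/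
open Matrix MeasureTheory

section Helpers

variable {Ω : Type*} {m : MeasurableSpace Ω} {μ : Measure Ω}

private lemma int_mul {f g : Ω → ℝ} (hf : MemLp f 2 μ) (hg : MemLp g 2 μ) :
    Integrable (fun ω => f ω * g ω) μ := by
  have h : (1 : ENNReal) / 1 = 1 / 2 + 1 / 2 := by
    rw [ENNReal.div_add_div_same, one_add_one_eq_two, div_one,
      ENNReal.div_self two_ne_zero ENNReal.ofNat_ne_top]
  have h2 : MemLp (f • g) 1 μ := hg.smul (r := 1) hf
  exact memLp_one_iff_integrable.mp h2

private lemma memℒp_apply {n : ℕ} {f : Ω → Fin n → ℝ} (hf : MemLp f 2 μ) (i : Fin n) :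
    MemLp (fun ω => f ω i) 2 μ :=
  (ContinuousLinearMap.proj (R := ℝ) (φ := fun _ : Fin n => ℝ) i).comp_memLp' hf

private lemma memℒp_mulVec {n k : ℕ} (M : Matrix (Fin n) (Fin k) ℝ) {f : Ω → Fin k → ℝ}
    (hf : MemLp f 2 μ) : MemLp (fun ω => M.mulVec (f ω)) 2 μ :=
  (LinearMap.toContinuousLinearMap (Matrix.mulVecLin M)).comp_memLp' hf

private lemma sm_mulVec {n k : ℕ} (M : Matrix (Fin n) (Fin k) ℝ) {f : Ω → Fin k → ℝ}
    (hf : StronglyMeasurable[m] f) : StronglyMeasurable[m] fun ω => M.mulVec (f ω) := by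
  have hm : Measurable[m] f := hf.measurable
  apply Measurable.stronglyMeasurable
  rw [measurable_pi_iff]
  intro i
  simp only [Matrix.mulVec, dotProduct]
  exact Finset.measurable_sum _ fun j _ => measurable_const.mul ((measurable_pi_apply j).comp hm)

private lemma integral_sum_mul_sum {ι κ : Type*} [Fintype ι] [Fintype κ]
    (c : ι → ℝ) (d : κ → ℝ) (f : ι → Ω → ℝ) (g : κ → Ω → ℝ)
    (hint : ∀ k l, Integrable (fun ω => f k ω * g l ω) μ) :
    ∫ ω, (∑ k, c k * f k ω) * (∑ l, d l * g l ω) ∂μ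
      = ∑ k, ∑ l, c k * d l * ∫ ω, f k ω * g l ω ∂μ := by
  have h : ∀ ω, (∑ k, c k * f k ω) * (∑ l, d l * g l ω)
      = ∑ k, ∑ l, (c k * d l) * (f k ω * g l ω) := by
    intro ω
    rw [Finset.sum_mul_sum]
    exact Finset.sum_congr rfl fun k _ => Finset.sum_congr rfl fun l _ => by ring
  simp_rw [h]
  rw [integral_finset_sum _ fun k _ => integrable_finset_sum _ fun l _ => (hint k l).const_mul _]
  refine Finset.sum_congr rfl fun k _ => ?_
  rw [integral_finset_sum _ fun l _ => (hint k l).const_mul _]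
  exact Finset.sum_congr rfl fun l _ => integral_const_mul _ _

private lemma integrable_sum_mul_sum {ι κ : Type*} [Fintype ι] [Fintype κ]
    (c : ι → ℝ) (d : κ → ℝ) (f : ι → Ω → ℝ) (g : κ → Ω → ℝ)
    (hint : ∀ k l, Integrable (fun ω => f k ω * g l ω) μ) :
    Integrable (fun ω => (∑ k, c k * f k ω) * (∑ l, d l * g l ω)) μ := by
  have h : (fun ω => (∑ k, c k * f k ω) * (∑ l, d l * g l ω))
      = fun ω => ∑ k, ∑ l, (c k * d l) * (f k ω * g l ω) := by
    funext ω
    rw [Finset.sum_mul_sum]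
    exact Finset.sum_congr rfl fun k _ => Finset.sum_congr rfl fun l _ => by ring
  rw [h]
  exact integrable_finset_sum _ fun k _ => integrable_finset_sum _ fun l _ => (hint k l).const_mul _

private lemma expand_integral {ι κ : Type*} [Fintype ι] [Fintype κ]
    (c c' : ι → ℝ) (d d' : κ → ℝ) (f : ι → Ω → ℝ) (g : κ → Ω → ℝ)
    (hff : ∀ k l, Integrable (fun ω => f k ω * f l ω) μ)
    (hfg : ∀ k l, Integrable (fun ω => f k ω * g l ω) μ)
    (hgf : ∀ k l, Integrable (fun ω => g k ω * f l ω) μ)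
    (hgg : ∀ k l, Integrable (fun ω => g k ω * g l ω) μ)
    (hfg0 : ∀ k l, ∫ ω, f k ω * g l ω ∂μ = 0)
    (hgf0 : ∀ k l, ∫ ω, g k ω * f l ω ∂μ = 0) :
    ∫ ω, (∑ k, c k * f k ω + ∑ l, d l * g l ω) * (∑ k, c' k * f k ω + ∑ l, d' l * g l ω) ∂μ
      = (∑ k, ∑ l, c k * c' l * ∫ ω, f k ω * f l ω ∂μ)
        + ∑ k, ∑ l, d k * d' l * ∫ ω, g k ω * g l ω ∂μ := by
  have i1 := integrable_sum_mul_sum (μ := μ) c c' f f hff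
  have i2 := integrable_sum_mul_sum (μ := μ) c d' f g hfg
  have i3 := integrable_sum_mul_sum (μ := μ) d c' g f hgf
  have i4 := integrable_sum_mul_sum (μ := μ) d d' g g hgg
  have hfun : (fun ω => (∑ k, c k * f k ω + ∑ l, d l * g l ω)
        * (∑ k, c' k * f k ω + ∑ l, d' l * g l ω))
      = fun ω => (∑ k, c k * f k ω) * (∑ k, c' k * f k ω)
          + ((∑ k, c k * f k ω) * (∑ l, d' l * g l ω)
            + ((∑ l, d l * g l ω) * (∑ k, c' k * f k ω)
              + (∑ l, d l * g l ω) * (∑ l, d' l * g l ω))) := funext fun ω => by ring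
  have i34 : Integrable (fun ω => (∑ k, d k * g k ω) * (∑ l, c' l * f l ω)
      + (∑ k, d k * g k ω) * (∑ l, d' l * g l ω)) μ := i3.add i4
  have i234 : Integrable (fun ω => (∑ k, c k * f k ω) * (∑ l, d' l * g l ω)
      + ((∑ k, d k * g k ω) * (∑ l, c' l * f l ω)
        + (∑ k, d k * g k ω) * (∑ l, d' l * g l ω))) μ := i2.add i34
  rw [hfun, integral_add i1 i234, integral_add i2 i34, integral_add i3 i4,
    integral_sum_mul_sum c c' f f hff, integral_sum_mul_sum c d' f g hfg,
    integral_sum_mul_sum d c' g f hgf, integral_sum_mul_sum d d' g g hgg]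
  simp [hfg0, hgf0]

private lemma quad_entry {n q : Type*} [Fintype n] [Fintype q]
    (A : Matrix n q ℝ) (B : Matrix q q ℝ) (i j : n) :
    (A * B * Aᵀ) i j = ∑ k, ∑ l, A i k * A j l * B k l := by
  simp only [Matrix.mul_apply, Matrix.transpose_apply, Finset.sum_mul]
  rw [Finset.sum_comm]
  exact Finset.sum_congr rfl fun k _ => Finset.sum_congr rfl fun l _ => by ring

end Helpers

/-- In the time-varying misspecified Kalman setting, if moreover
`E[v_t v_tᵀ | 𝔉_{t−1}] = F_t` a.s. for a deterministic matrix `F_t`, then for every `t ≥ 1`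
`E[(a_{t+1} − a'_{t+1})(a_{t+1} − a'_{t+1})ᵀ]
  = T_t (K_t − K'_t) F_t (K_t − K'_t)ᵀ T_tᵀ
    + T_t L'_t E[(a_t − a'_t)(a_t − a'_t)ᵀ] L'_tᵀ T_tᵀ`. -/
theorem second_moment_diff_recursion
    {Ω : Type*} {m0 : MeasurableSpace Ω} (μ : Measure Ω) [IsProbabilityMeasure μ]
    (ℱ : Filtration ℕ m0) (hℱ0 : ℱ 0 = ⊥)
    {d p : ℕ}
    (Z : ℕ → Matrix (Fin d) (Fin p) ℝ) (T : ℕ → Matrix (Fin p) (Fin p) ℝ)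
    (K K' : ℕ → Matrix (Fin p) (Fin d) ℝ)
    (L' : ℕ → Matrix (Fin p) (Fin p) ℝ)
    (hL' : ∀ t, L' t = 1 - K' t * Z t)
    (y : ℕ → Ω → Fin d → ℝ)
    (hy_meas : ∀ t, StronglyMeasurable[ℱ t] (y t))
    (hy_L2 : ∀ t, MemLp (y t) 2 μ)
    (a a' : ℕ → Ω → Fin p → ℝ)
    (a₁ a₁' : Fin p → ℝ)
    (ha1 : ∀ ω, a 1 ω = a₁) (ha1' : ∀ ω, a' 1 ω = a₁')
    (ha : ∀ t, 1 ≤ t → ∀ ω,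
      a (t + 1) ω = (T t).mulVec (a t ω)
        + (T t).mulVec ((K t).mulVec (y t ω - (Z t).mulVec (a t ω))))
    (ha' : ∀ t, 1 ≤ t → ∀ ω,
      a' (t + 1) ω = (T t).mulVec (a' t ω)
        + (T t).mulVec ((K' t).mulVec (y t ω - (Z t).mulVec (a' t ω))))
    (ha_L2 : ∀ t, MemLp (a t) 2 μ) (ha'_L2 : ∀ t, MemLp (a' t) 2 μ)
    (v : ℕ → Ω → Fin d → ℝ)
    (hv : ∀ t ω, v t ω = y t ω - (Z t).mulVec (a t ω))
    (hcond : ∀ t, 1 ≤ t → μ[y t | ℱ (t - 1)] =ᵐ[μ] fun ω => (Z t).mulVec (a t ω))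
    (F : ℕ → Matrix (Fin d) (Fin d) ℝ)
    (hF : ∀ t, 1 ≤ t → ∀ i j,
      μ[fun ω => v t ω i * v t ω j | ℱ (t - 1)] =ᵐ[μ] fun _ => F t i j) :
    ∀ t, 1 ≤ t →
      (Matrix.of fun i j =>
          ∫ ω, (a (t + 1) ω i - a' (t + 1) ω i) * (a (t + 1) ω j - a' (t + 1) ω j) ∂μ)
        = T t * (K t - K' t) * F t * (K t - K' t)ᵀ * (T t)ᵀ
          + T t * L' t *
            (Matrix.of fun i j => ∫ ω, (a t ω i - a' t ω i) * (a t ω j - a' t ω j) ∂μ)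
            * (L' t)ᵀ * (T t)ᵀ := by
  -- measurability of the state recursions
  have ha_sm : ∀ (KK : ℕ → Matrix (Fin p) (Fin d) ℝ) (b : ℕ → Ω → Fin p → ℝ)
      (b₁ : Fin p → ℝ), (∀ ω, b 1 ω = b₁) →
      (∀ u, 1 ≤ u → ∀ ω, b (u + 1) ω = (T u).mulVec (b u ω)
        + (T u).mulVec ((KK u).mulVec (y u ω - (Z u).mulVec (b u ω)))) →
      ∀ u, 1 ≤ u → StronglyMeasurable[ℱ (u - 1)] (b u) := by
    intro KK b b₁ hb1 hb u hu
    induction u, hu using Nat.le_induction with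
    | base =>
      rw [show b 1 = fun _ => b₁ from funext hb1]
      exact stronglyMeasurable_const
    | succ u hu ih =>
      rw [show b (u + 1) = fun ω => (T u).mulVec (b u ω)
          + (T u).mulVec ((KK u).mulVec (y u ω - (Z u).mulVec (b u ω))) from funext (hb u hu)]
      have h1 : StronglyMeasurable[ℱ u] (b u) := ih.mono (ℱ.mono (Nat.sub_le u 1))
      have h2 := hy_meas u
      have hsub : StronglyMeasurable[ℱ u] fun ω => y u ω - (Z u).mulVec (b u ω) :=
        h2.sub (sm_mulVec _ h1)
      have hfin : StronglyMeasurable[ℱ u] fun ω => (T u).mulVec (b u ω)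
          + (T u).mulVec ((KK u).mulVec (y u ω - (Z u).mulVec (b u ω))) :=
        (sm_mulVec _ h1).add (sm_mulVec _ (sm_mulVec _ hsub))
      simpa [Nat.add_sub_cancel] using hfin
  intro t ht
  have hm : ℱ (t - 1) ≤ m0 := ℱ.le _
  haveI hsig : SigmaFinite (μ.trim hm) := inferInstance
  have hsma : StronglyMeasurable[ℱ (t - 1)] (a t) := ha_sm K a a₁ ha1 ha t ht
  have hsma' : StronglyMeasurable[ℱ (t - 1)] (a' t) := ha_sm K' a' a₁' ha1' ha' t ht
  have hv_eq : v t = fun ω => y t ω - (Z t).mulVec (a t ω) := funext (hv t)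
  have hv2 : MemLp (v t) 2 μ := by
    rw [hv_eq]; exact (hy_L2 t).sub (memℒp_mulVec _ (ha_L2 t))
  have hvk2 : ∀ k, MemLp (fun ω => v t ω k) 2 μ := fun k => memℒp_apply hv2 k
  have hek2 : ∀ l, MemLp (fun ω => a t ω l - a' t ω l) 2 μ := fun l =>
    (memℒp_apply (ha_L2 t) l).sub (memℒp_apply (ha'_L2 t) l)
  have hsme : ∀ l, StronglyMeasurable[ℱ (t - 1)] fun ω => a t ω l - a' t ω l := fun l =>
    ((continuous_apply l).comp_stronglyMeasurable hsma).sub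
      ((continuous_apply l).comp_stronglyMeasurable hsma')
  have hyint : Integrable (y t) μ := (hy_L2 t).integrable one_le_two
  have hZa2 : MemLp (fun ω => (Z t).mulVec (a t ω)) 2 μ := memℒp_mulVec _ (ha_L2 t)
  have hZaint : Integrable (fun ω => (Z t).mulVec (a t ω)) μ := hZa2.integrable one_le_two
  have hsmZa : StronglyMeasurable[ℱ (t - 1)] fun ω => (Z t).mulVec (a t ω) := sm_mulVec _ hsma
  have hproj : ∀ (g : Ω → Fin d → ℝ) (s' : Set Ω) (i : Fin d), Integrable g μ →
      ∫ ω in s', g ω i ∂μ = (∫ ω in s', g ω ∂μ) i := by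
    intro g s' i hg
    exact (ContinuousLinearMap.proj (R := ℝ) (φ := fun _ : Fin d => ℝ) i).integral_comp_comm
      hg.integrableOn
  have hcondk : ∀ i, (fun ω => (Z t).mulVec (a t ω) i)
      =ᵐ[μ] μ[fun ω => y t ω i|ℱ (t - 1)] := by
    intro i
    refine ae_eq_condExp_of_forall_setIntegral_eq hm
      ((memℒp_apply (hy_L2 t) i).integrable one_le_two)
      (fun s' _ _ => ((memℒp_apply hZa2 i).integrable one_le_two).integrableOn)
      (fun s' hs' _ => ?_)
      ((continuous_apply i).comp_stronglyMeasurable hsmZa).aestronglyMeasurable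
    have hvint : ∫ ω in s', (Z t).mulVec (a t ω) ∂μ = ∫ ω in s', y t ω ∂μ := by
      rw [← setIntegral_condExp hm hyint hs']
      exact setIntegral_congr_ae (hm _ hs') ((hcond t ht).symm.mono fun ω hω _ => hω)
    rw [hproj _ s' i hZaint, hproj _ s' i hyint, hvint]
  have hcond0 : ∀ k, μ[fun ω => v t ω k|ℱ (t - 1)] =ᵐ[μ] 0 := by
    intro k
    have hks : (fun ω => v t ω k)
        = (fun ω => y t ω k) - fun ω => (Z t).mulVec (a t ω) k := funext fun ω => by
      rw [hv t ω]; rfl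
    rw [hks]
    have h1 := condExp_sub (μ := μ) (m := ℱ (t - 1))
      ((memℒp_apply (hy_L2 t) k).integrable one_le_two)
      ((memℒp_apply hZa2 k).integrable one_le_two)
    refine h1.trans ?_
    have h2 : μ[fun ω => (Z t).mulVec (a t ω) k|ℱ (t - 1)]
        = fun ω => (Z t).mulVec (a t ω) k :=
      condExp_of_stronglyMeasurable hm ((continuous_apply k).comp_stronglyMeasurable hsmZa)
        ((memℒp_apply hZa2 k).integrable one_le_two)
    rw [h2]
    filter_upwards [hcondk k] with ω h3
    simp [Pi.sub_apply, ← h3]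
  have hIve : ∀ k l, ∫ ω, v t ω k * (a t ω l - a' t ω l) ∂μ = 0 := by
    intro k l
    have hint : Integrable (fun ω => (a t ω l - a' t ω l) * v t ω k) μ :=
      int_mul (hek2 l) (hvk2 k)
    have hpull := condExp_mul_of_stronglyMeasurable_left (m := ℱ (t - 1)) (hsme l)
      (show Integrable ((fun ω => a t ω l - a' t ω l) * fun ω => v t ω k) μ from hint)
      ((hvk2 k).integrable one_le_two)
    have h0 : μ[(fun ω => a t ω l - a' t ω l) * fun ω => v t ω k|ℱ (t - 1)] =ᵐ[μ] 0 := by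
      refine hpull.trans ?_
      filter_upwards [hcond0 k] with ω h
      simp [Pi.mul_apply, h]
    have hz : ∫ ω, (a t ω l - a' t ω l) * v t ω k ∂μ = 0 := by
      calc ∫ ω, (a t ω l - a' t ω l) * v t ω k ∂μ
          = ∫ ω, (μ[(fun ω => a t ω l - a' t ω l) * fun ω => v t ω k|ℱ (t - 1)]) ω ∂μ :=
            (integral_condExp hm).symm
        _ = 0 := by rw [integral_congr_ae h0]; simp
    rw [← hz]
    exact integral_congr_ae (Filter.Eventually.of_forall fun ω => mul_comm _ _)
  have hIvv : ∀ k l, ∫ ω, v t ω k * v t ω l ∂μ = F t k l := by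
    intro k l
    have hint : Integrable (fun ω => v t ω k * v t ω l) μ := int_mul (hvk2 k) (hvk2 l)
    calc ∫ ω, v t ω k * v t ω l ∂μ
        = ∫ ω, (μ[fun ω => v t ω k * v t ω l|ℱ (t - 1)]) ω ∂μ :=
          (integral_condExp hm).symm
      _ = ∫ _, F t k l ∂μ := integral_congr_ae (hF t ht k l)
      _ = F t k l := by simp
  have hvec : ∀ ω, a (t + 1) ω - a' (t + 1) ω
      = (T t * (K t - K' t)).mulVec (v t ω) + (T t * L' t).mulVec (a t ω - a' t ω) := by
    intro ω
    rw [ha t ht ω, ha' t ht ω, hv t ω, hL' t]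
    simp only [← Matrix.mulVec_mulVec, Matrix.sub_mulVec, Matrix.mulVec_sub, Matrix.mulVec_add,
      Matrix.add_mulVec, Matrix.one_mulVec]
    abel
  have hcompo : ∀ ω (i : Fin p), a (t + 1) ω i - a' (t + 1) ω i
      = (∑ k, (T t * (K t - K' t)) i k * v t ω k)
        + ∑ l, (T t * L' t) i l * (a t ω l - a' t ω l) := by
    intro ω i
    have h := congrFun (hvec ω) i
    simpa [Matrix.mulVec, dotProduct, Pi.sub_apply, Pi.add_apply] using h
  ext i j
  have hre : (fun ω => (a (t + 1) ω i - a' (t + 1) ω i) * (a (t + 1) ω j - a' (t + 1) ω j))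
      = fun ω => ((∑ k, (T t * (K t - K' t)) i k * v t ω k)
            + ∑ l, (T t * L' t) i l * (a t ω l - a' t ω l))
          * ((∑ k, (T t * (K t - K' t)) j k * v t ω k)
            + ∑ l, (T t * L' t) j l * (a t ω l - a' t ω l)) :=
    funext fun ω => by rw [hcompo ω i, hcompo ω j]
  have hkey := expand_integral (μ := μ)
    (fun k => (T t * (K t - K' t)) i k) (fun k => (T t * (K t - K' t)) j k)
    (fun l => (T t * L' t) i l) (fun l => (T t * L' t) j l)
    (fun k ω => v t ω k) (fun l ω => a t ω l - a' t ω l)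
    (fun k l => int_mul (hvk2 k) (hvk2 l)) (fun k l => int_mul (hvk2 k) (hek2 l))
    (fun k l => int_mul (hek2 k) (hvk2 l)) (fun k l => int_mul (hek2 k) (hek2 l))
    hIve
    (fun k l => by
      rw [← hIve l k]
      exact integral_congr_ae (Filter.Eventually.of_forall fun ω => mul_comm _ _))
  have hM : T t * (K t - K' t) * F t * (K t - K' t)ᵀ * (T t)ᵀ
      = (T t * (K t - K' t)) * F t * (T t * (K t - K' t))ᵀ := by
    rw [Matrix.transpose_mul, ← Matrix.mul_assoc]
  have hN : T t * L' t *
        (Matrix.of fun k l => ∫ ω, (a t ω k - a' t ω k) * (a t ω l - a' t ω l) ∂μ)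
        * (L' t)ᵀ * (T t)ᵀ
      = (T t * L' t) *
        (Matrix.of fun k l => ∫ ω, (a t ω k - a' t ω k) * (a t ω l - a' t ω l) ∂μ)
        * (T t * L' t)ᵀ := by
    rw [Matrix.transpose_mul, ← Matrix.mul_assoc]
  rw [Matrix.add_apply, Matrix.of_apply, hre, hkey, hM, hN, quad_entry, quad_entry]
  simp only [Matrix.of_apply, hIvv]
end

section
/- Let (B_t)_{t≥1} and B be p×p real matrices satisfying: (i) there exist M₁ > 0 and r₁ ∈ (0,1) with ‖B_t − B‖_F ≤ M₁ r₁ᵗ for all t ≥ 1 and ‖Bᵏ‖_F ≤ M₁ r₁ᵏ for all k ≥ 0; (ii) there exists M₃ > 0 such that ‖∏_{i=k}^{l} B_{t−i}‖_F ≤ M₃ for all integers 0 ≤ k ≤ l < t (where ∏_{i=k}^{l} B_{t−i} denotes the ordered product B_{t−k} B_{t−k−1} ⋯ B_{t−l}). Then there exist M > 0 and r ∈ (0,1) such that for all t ≥ 1 and all 0 ≤ j ≤ t − 1: ‖B_t B_{t−1} ⋯ B_{t−j} − B^{j+1}‖_F ≤ (j+1) M rᵗ. -/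
open Matrix Set

/-- The Frobenius norm of a real matrix: `‖A‖_F = √(tr (A * Aᵀ))`. -/
noncomputable def frobNorm {m n : Type*} [Fintype m] [Fintype n] (A : Matrix m n ℝ) : ℝ :=
  Real.sqrt (Matrix.trace (A * Aᵀ))

/-- The ordered product `∏_{i=k}^{l} B_{t−i} = B_{t−k} B_{t−k−1} ⋯ B_{t−l}`. -/
noncomputable def ordProd {p : ℕ} (B : ℕ → Matrix (Fin p) (Fin p) ℝ) (t k l : ℕ) :
    Matrix (Fin p) (Fin p) ℝ :=
  ((List.range (l - k + 1)).map fun i => B (t - (k + i))).prod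

attribute [local instance] Matrix.frobeniusSeminormedAddCommGroup Matrix.frobeniusNormedRing

/-- `frobNorm` agrees with mathlib's Frobenius norm. -/
lemma frobNorm_eq_norm {p : ℕ} (A : Matrix (Fin p) (Fin p) ℝ) : frobNorm A = ‖A‖ := by
  rw [frobNorm, Matrix.frobenius_norm_def, Matrix.trace, ← Real.sqrt_eq_rpow]
  congr 1
  simp_rw [Matrix.diag, Matrix.mul_apply, Matrix.transpose_apply, Real.rpow_two,
    Real.norm_eq_abs, sq_abs, sq]

/-- Telescoping identity: `f 0 * ⋯ * f j - C ^ (j+1)` as a sum. -/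
lemma telescope_prod_sub_pow {R : Type*} [Ring R] (f : ℕ → R) (C : R) (j : ℕ) :
    ((List.range (j + 1)).map f).prod - C ^ (j + 1) =
      ∑ i ∈ Finset.range (j + 1),
        C ^ i * (f i - C) * ((List.range (j - i)).map fun m => f (i + 1 + m)).prod := by
  induction j with
  | zero => simp [List.range_succ]
  | succ j ih =>
    have hP : ((List.range (j + 2)).map f).prod = ((List.range (j + 1)).map f).prod * f (j + 1) := by
      rw [List.range_succ, List.map_append, List.prod_append]; simp
    have hT : ∀ i ∈ Finset.range (j + 1),
        C ^ i * (f i - C) * ((List.range (j + 1 - i)).map fun m => f (i + 1 + m)).prod =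
        (C ^ i * (f i - C) * ((List.range (j - i)).map fun m => f (i + 1 + m)).prod) * f (j + 1) := by
      intro i hi
      have hij : i ≤ j := by simpa using Nat.lt_succ_iff.mp (Finset.mem_range.mp hi)
      have h1 : j + 1 - i = (j - i) + 1 := by omega
      rw [h1, List.range_succ, List.map_append, List.prod_append]
      have h2 : i + 1 + (j - i) = j + 1 := by omega
      simp [h2, mul_assoc]
    rw [Finset.sum_range_succ, Finset.sum_congr rfl hT, ← Finset.sum_mul, ← ih, hP]
    have : j + 1 - (j + 1) = 0 := by omega
    rw [this]
    simp only [List.range_zero, List.map_nil, List.prod_nil, mul_one]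
    rw [pow_succ]
    noncomm_ring

/-- If `‖B_t − B‖_F ≤ M₁ r₁ᵗ` (t ≥ 1), `‖Bᵏ‖_F ≤ M₁ r₁ᵏ` (k ≥ 0), and the
ordered products `∏_{i=k}^{l} B_{t−i}` (`0 ≤ k ≤ l < t`) are uniformly bounded by `M₃` in
Frobenius norm, then there are `M > 0`, `r ∈ (0,1)` with
`‖B_t B_{t−1} ⋯ B_{t−j} − B^{j+1}‖_F ≤ (j+1) M rᵗ` for all `t ≥ 1`, `0 ≤ j ≤ t−1`. -/
theorem ordProd_sub_pow_le_geometric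
    {p : ℕ} (B : ℕ → Matrix (Fin p) (Fin p) ℝ) (Blim : Matrix (Fin p) (Fin p) ℝ)
    (M₁ r₁ : ℝ) (hM₁ : 0 < M₁) (hr₁ : r₁ ∈ Ioo (0 : ℝ) 1)
    (hB : ∀ t : ℕ, 1 ≤ t → frobNorm (B t - Blim) ≤ M₁ * r₁ ^ t)
    (hBpow : ∀ k : ℕ, frobNorm (Blim ^ k) ≤ M₁ * r₁ ^ k)
    (M₃ : ℝ) (hM₃ : 0 < M₃)
    (hbdd : ∀ t k l : ℕ, k ≤ l → l < t → frobNorm (ordProd B t k l) ≤ M₃) :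
    ∃ M > (0 : ℝ), ∃ r ∈ Ioo (0 : ℝ) 1, ∀ t : ℕ, 1 ≤ t → ∀ j : ℕ, j < t →
      frobNorm (ordProd B t 0 j - Blim ^ (j + 1)) ≤ (j + 1 : ℝ) * M * r ^ t := by
  set M₃' : ℝ := max M₃ ‖(1 : Matrix (Fin p) (Fin p) ℝ)‖ with hM₃'def
  have hM₃'pos : 0 < M₃' := lt_of_lt_of_le hM₃ (le_max_left _ _)
  refine ⟨M₁ * M₁ * M₃', by positivity, r₁, hr₁, ?_⟩
  have hr0 : 0 < r₁ := hr₁.1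
  intro t ht j hjt
  set f : ℕ → Matrix (Fin p) (Fin p) ℝ := fun i => B (t - i) with hf
  have hord : ordProd B t 0 j = ((List.range (j + 1)).map f).prod := by
    simp [ordProd, hf]
  rw [frobNorm_eq_norm, hord, telescope_prod_sub_pow f Blim j]
  calc ‖∑ i ∈ Finset.range (j + 1),
        Blim ^ i * (f i - Blim) * ((List.range (j - i)).map fun m => f (i + 1 + m)).prod‖
      ≤ ∑ i ∈ Finset.range (j + 1),
        ‖Blim ^ i * (f i - Blim) * ((List.range (j - i)).map fun m => f (i + 1 + m)).prod‖ :=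
        norm_sum_le _ _
    _ ≤ ∑ _i ∈ Finset.range (j + 1), (M₁ * M₁ * M₃') * r₁ ^ t := by
        apply Finset.sum_le_sum
        intro i hi
        have hij : i ≤ j := Nat.lt_succ_iff.mp (Finset.mem_range.mp hi)
        have h1 : ‖Blim ^ i‖ ≤ M₁ * r₁ ^ i := by rw [← frobNorm_eq_norm]; exact hBpow i
        have h2 : ‖f i - Blim‖ ≤ M₁ * r₁ ^ (t - i) := by
          rw [← frobNorm_eq_norm]
          exact hB (t - i) (by omega)
        have h3 : ‖((List.range (j - i)).map fun m => f (i + 1 + m)).prod‖ ≤ M₃' := by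
          rcases eq_or_lt_of_le hij with h | h
          · subst h
            simp only [Nat.sub_self, List.range_zero, List.map_nil, List.prod_nil]
            exact le_max_right _ _
          · have : ((List.range (j - i)).map fun m => f (i + 1 + m)).prod =
                ordProd B t (i + 1) j := by
              rw [ordProd]
              congr 1
              have : j - (i + 1) + 1 = j - i := by omega
              rw [this]
            rw [this, ← frobNorm_eq_norm]
            exact le_trans (hbdd t (i + 1) j (by omega) hjt) (le_max_left _ _)
        calc ‖Blim ^ i * (f i - Blim) * ((List.range (j - i)).map fun m => f (i + 1 + m)).prod‖
            ≤ ‖Blim ^ i‖ * ‖f i - Blim‖ * ‖((List.range (j - i)).map fun m => f (i + 1 + m)).prod‖ :=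
              le_trans (norm_mul_le _ _) (by gcongr; exact norm_mul_le _ _)
          _ ≤ (M₁ * r₁ ^ i) * (M₁ * r₁ ^ (t - i)) * M₃' := by
              gcongr <;> positivity
          _ = (M₁ * M₁ * M₃') * (r₁ ^ i * r₁ ^ (t - i)) := by ring
          _ = (M₁ * M₁ * M₃') * r₁ ^ t := by
              rw [← pow_add]
              congr 2
              omega
    _ = (j + 1 : ℝ) * (M₁ * M₁ * M₃') * r₁ ^ t := by
        rw [Finset.sum_const, Finset.card_range, nsmul_eq_mul]
        push_cast
        ring
end

section
/- In the time-invariant misspecified Kalman setting, for every t ≥ 1 one has E[v'_{t+1}] = Z · (T L'_t)(T L'_{t−1}) ⋯ (T L'_1) · (a₁ − a'₁). Consequently, if the ordered product (T L'_t)(T L'_{t−1}) ⋯ (T L'_1) converges to the zero matrix as t → ∞, then E[v'_t] → 0 as t → ∞. -/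
open Matrix MeasureTheory Filter

lemma abs_entry_le_frobNorm {m n : Type*} [Fintype m] [Fintype n]
    (A : Matrix m n ℝ) (j : m) (k : n) : |A j k| ≤ frobNorm A := by
  have htr : Matrix.trace (A * Aᵀ) = ∑ x, ∑ y, (A x y) ^ 2 := by
    simp [Matrix.trace, Matrix.mul_apply, Matrix.diag, sq]
  have h1 : (A j k) ^ 2 ≤ ∑ x, ∑ y, (A x y) ^ 2 := by
    calc (A j k) ^ 2 ≤ ∑ y, (A j y) ^ 2 :=
          Finset.single_le_sum (f := fun y => (A j y) ^ 2)
            (fun _ _ => sq_nonneg _) (Finset.mem_univ k)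
      _ ≤ ∑ x, ∑ y, (A x y) ^ 2 :=
          Finset.single_le_sum (f := fun x => ∑ y, (A x y) ^ 2)
            (fun _ _ => Finset.sum_nonneg fun _ _ => sq_nonneg _) (Finset.mem_univ j)
  calc |A j k| = Real.sqrt ((A j k) ^ 2) := (Real.sqrt_sq_eq_abs _).symm
    _ ≤ Real.sqrt (∑ x, ∑ y, (A x y) ^ 2) := Real.sqrt_le_sqrt h1
    _ = frobNorm A := by rw [frobNorm, htr]

lemma integrable_mulVec {Ω : Type*} [MeasurableSpace Ω] {μ : Measure Ω} {m n : ℕ}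
    (M : Matrix (Fin m) (Fin n) ℝ) {f : Ω → Fin n → ℝ} (hf : Integrable f μ) :
    Integrable (fun ω => M.mulVec (f ω)) μ := by
  have := (LinearMap.toContinuousLinearMap (Matrix.mulVecLin M)).integrable_comp hf
  simpa using this

lemma integral_mulVec {Ω : Type*} [MeasurableSpace Ω] {μ : Measure Ω} {m n : ℕ}
    (M : Matrix (Fin m) (Fin n) ℝ) {f : Ω → Fin n → ℝ} (hf : Integrable f μ) :
    ∫ ω, M.mulVec (f ω) ∂μ = M.mulVec (∫ ω, f ω ∂μ) := by
  have := (LinearMap.toContinuousLinearMap (Matrix.mulVecLin M)).integral_comp_comm hf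
  simpa using this

lemma integral_component {Ω : Type*} [MeasurableSpace Ω] {μ : Measure Ω} {n : ℕ}
    {f : Ω → Fin n → ℝ} (hf : Integrable f μ) (i : Fin n) :
    ∫ ω, f ω i ∂μ = (∫ ω, f ω ∂μ) i := by
  have := (ContinuousLinearMap.proj (R := ℝ) (φ := fun _ : Fin n => ℝ) i).integral_comp_comm hf
  simpa using this

/-- In the time-invariant misspecified Kalman setting,
`E[v'_{t+1}] = Z (T L'_t)(T L'_{t−1}) ⋯ (T L'_1) (a₁ − a'₁)` for every `t ≥ 1`;
consequently, if the ordered product `(T L'_t) ⋯ (T L'_1)` tends to the zero matrix,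
then `E[v'_t] → 0`. -/
theorem mean_misspecified_error_formula_and_tendsto_zero
    {Ω : Type*} {m0 : MeasurableSpace Ω} (μ : Measure Ω) [IsProbabilityMeasure μ]
    (ℱ : Filtration ℕ m0) (hℱ0 : ℱ 0 = ⊥)
    {d p : ℕ}
    (Z : Matrix (Fin d) (Fin p) ℝ) (T : Matrix (Fin p) (Fin p) ℝ)
    (K K' : ℕ → Matrix (Fin p) (Fin d) ℝ)
    (L' : ℕ → Matrix (Fin p) (Fin p) ℝ)
    (hL' : ∀ t, L' t = 1 - K' t * Z)
    (y : ℕ → Ω → Fin d → ℝ)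
    (hy_meas : ∀ t, StronglyMeasurable[ℱ t] (y t))
    (hy_L2 : ∀ t, MemLp (y t) 2 μ)
    (a a' : ℕ → Ω → Fin p → ℝ)
    (a₁ a₁' : Fin p → ℝ)
    (ha1 : ∀ ω, a 1 ω = a₁) (ha1' : ∀ ω, a' 1 ω = a₁')
    (ha : ∀ t, 1 ≤ t → ∀ ω,
      a (t + 1) ω = T.mulVec (a t ω) + T.mulVec ((K t).mulVec (y t ω - Z.mulVec (a t ω))))
    (ha' : ∀ t, 1 ≤ t → ∀ ω,
      a' (t + 1) ω
        = T.mulVec (a' t ω) + T.mulVec ((K' t).mulVec (y t ω - Z.mulVec (a' t ω))))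
    (ha_L2 : ∀ t, MemLp (a t) 2 μ) (ha'_L2 : ∀ t, MemLp (a' t) 2 μ)
    (v' : ℕ → Ω → Fin d → ℝ)
    (hv' : ∀ t ω, v' t ω = y t ω - Z.mulVec (a' t ω))
    (hcond : ∀ t, 1 ≤ t → μ[y t | ℱ (t - 1)] =ᵐ[μ] fun ω => Z.mulVec (a t ω)) :
    (∀ t : ℕ, 1 ≤ t →
      (fun i => ∫ ω, v' (t + 1) ω i ∂μ)
        = (Z * ordProd (fun s => T * L' s) t 0 (t - 1)).mulVec (a₁ - a₁')) ∧
    (Tendsto (fun t : ℕ => frobNorm (ordProd (fun s => T * L' s) t 0 (t - 1)))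
        atTop (nhds 0) →
      ∀ i, Tendsto (fun t : ℕ => ∫ ω, v' t ω i ∂μ) atTop (nhds 0)) := by
  classical
  set B : ℕ → Matrix (Fin p) (Fin p) ℝ := fun s => T * L' s with hB
  -- basic integrability
  have hyI : ∀ t, Integrable (y t) μ := fun t => (hy_L2 t).integrable one_le_two
  have haI : ∀ t, Integrable (a t) μ := fun t => (ha_L2 t).integrable one_le_two
  have ha'I : ∀ t, Integrable (a' t) μ := fun t => (ha'_L2 t).integrable one_le_two
  -- E[y_t] = Z E[a_t] for t ≥ 1
  have hy_int : ∀ t, 1 ≤ t → ∫ ω, y t ω ∂μ = Z.mulVec (∫ ω, a t ω ∂μ) := by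
    intro t ht
    have h1 : ∫ ω, (μ[y t | ℱ (t - 1)]) ω ∂μ = ∫ ω, y t ω ∂μ :=
      integral_condExp (ℱ.le (t - 1))
    have h2 : ∫ ω, (μ[y t | ℱ (t - 1)]) ω ∂μ = ∫ ω, Z.mulVec (a t ω) ∂μ :=
      integral_congr_ae (hcond t ht)
    rw [← h1, h2, integral_mulVec Z (haI t)]
  -- recursions for the means
  have hIa : ∀ t, 1 ≤ t →
      ∫ ω, a (t + 1) ω ∂μ = T.mulVec (∫ ω, a t ω ∂μ) := by
    intro t ht
    have hint1 : Integrable (fun ω => T.mulVec (a t ω)) μ := integrable_mulVec T (haI t)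
    have hint2 : Integrable (fun ω => y t ω - Z.mulVec (a t ω)) μ :=
      (hyI t).sub (integrable_mulVec Z (haI t))
    have hint3 : Integrable (fun ω => T.mulVec ((K t).mulVec (y t ω - Z.mulVec (a t ω)))) μ :=
      integrable_mulVec T (integrable_mulVec (K t) hint2)
    calc ∫ ω, a (t + 1) ω ∂μ
        = ∫ ω, (T.mulVec (a t ω)
            + T.mulVec ((K t).mulVec (y t ω - Z.mulVec (a t ω)))) ∂μ := by
          apply integral_congr_ae; filter_upwards with ω; rw [ha t ht ω]
      _ = (∫ ω, T.mulVec (a t ω) ∂μ)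
            + ∫ ω, T.mulVec ((K t).mulVec (y t ω - Z.mulVec (a t ω))) ∂μ :=
          integral_add hint1 hint3
      _ = T.mulVec (∫ ω, a t ω ∂μ)
            + T.mulVec ((K t).mulVec (∫ ω, (y t ω - Z.mulVec (a t ω)) ∂μ)) := by
          rw [integral_mulVec T (haI t), integral_mulVec T (integrable_mulVec (K t) hint2),
            integral_mulVec (K t) hint2]
      _ = T.mulVec (∫ ω, a t ω ∂μ) := by
          rw [integral_sub (hyI t) (integrable_mulVec Z (haI t)),
            integral_mulVec Z (haI t), hy_int t ht]
          simp
  have hIa' : ∀ t, 1 ≤ t →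
      ∫ ω, a' (t + 1) ω ∂μ = T.mulVec (∫ ω, a' t ω ∂μ)
        + T.mulVec ((K' t).mulVec (Z.mulVec (∫ ω, a t ω ∂μ) - Z.mulVec (∫ ω, a' t ω ∂μ))) := by
    intro t ht
    have hint1 : Integrable (fun ω => T.mulVec (a' t ω)) μ := integrable_mulVec T (ha'I t)
    have hint2 : Integrable (fun ω => y t ω - Z.mulVec (a' t ω)) μ :=
      (hyI t).sub (integrable_mulVec Z (ha'I t))
    have hint3 : Integrable (fun ω => T.mulVec ((K' t).mulVec (y t ω - Z.mulVec (a' t ω)))) μ :=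
      integrable_mulVec T (integrable_mulVec (K' t) hint2)
    calc ∫ ω, a' (t + 1) ω ∂μ
        = ∫ ω, (T.mulVec (a' t ω)
            + T.mulVec ((K' t).mulVec (y t ω - Z.mulVec (a' t ω)))) ∂μ := by
          apply integral_congr_ae; filter_upwards with ω; rw [ha' t ht ω]
      _ = (∫ ω, T.mulVec (a' t ω) ∂μ)
            + ∫ ω, T.mulVec ((K' t).mulVec (y t ω - Z.mulVec (a' t ω))) ∂μ :=
          integral_add hint1 hint3
      _ = T.mulVec (∫ ω, a' t ω ∂μ)
            + T.mulVec ((K' t).mulVec (∫ ω, (y t ω - Z.mulVec (a' t ω)) ∂μ)) := by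
          rw [integral_mulVec T (ha'I t), integral_mulVec T (integrable_mulVec (K' t) hint2),
            integral_mulVec (K' t) hint2]
      _ = _ := by
          rw [integral_sub (hyI t) (integrable_mulVec Z (ha'I t)),
            integral_mulVec Z (ha'I t), hy_int t ht]
  -- one-step recursion for the mean difference
  have hstep : ∀ t, 1 ≤ t →
      (∫ ω, a (t + 1) ω ∂μ) - (∫ ω, a' (t + 1) ω ∂μ)
        = (B t).mulVec ((∫ ω, a t ω ∂μ) - (∫ ω, a' t ω ∂μ)) := by
    intro t ht
    have hBt : B t = T * (1 - K' t * Z) := by rw [hB]; simp [hL' t]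
    rw [hIa t ht, hIa' t ht, hBt]
    set u := ∫ ω, a t ω ∂μ
    set u' := ∫ ω, a' t ω ∂μ
    simp only [← Matrix.mulVec_mulVec, Matrix.sub_mulVec, Matrix.one_mulVec,
      Matrix.mulVec_sub]
    abel
  -- ordProd in convenient form
  have hQrec : ∀ t : ℕ,
      ((List.range (t + 1)).map fun i => B (t + 1 - i)).prod
        = B (t + 1) * ((List.range t).map fun i => B (t - i)).prod := by
    intro t
    have hfun : ((fun i => B (t + 1 - i)) ∘ Nat.succ) = fun i => B (t - i) := by
      funext i; simp [Nat.succ_sub_succ]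
    rw [List.range_succ_eq_map, List.map_cons, List.map_map, hfun, List.prod_cons,
      Nat.sub_zero]
  have hOP : ∀ t, 1 ≤ t →
      ordProd B t 0 (t - 1) = ((List.range t).map fun i => B (t - i)).prod := by
    intro t ht
    simp [ordProd, Nat.sub_add_cancel ht]
  -- the closed formula for the mean difference
  have hE : ∀ t, 1 ≤ t →
      (∫ ω, a (t + 1) ω ∂μ) - (∫ ω, a' (t + 1) ω ∂μ)
        = (ordProd B t 0 (t - 1)).mulVec (a₁ - a₁') := by
    intro t ht
    induction t, ht using Nat.le_induction with
    | base =>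
      have h1 : ∫ ω, a 1 ω ∂μ = a₁ := by
        rw [integral_congr_ae (Filter.Eventually.of_forall fun ω => ha1 ω)]
        simp
      have h1' : ∫ ω, a' 1 ω ∂μ = a₁' := by
        rw [integral_congr_ae (Filter.Eventually.of_forall fun ω => ha1' ω)]
        simp
      rw [hstep 1 le_rfl, h1, h1', hOP 1 le_rfl]
      simp [List.range_succ]
    | succ t ht ih =>
      have h1 : ordProd B (t + 1) 0 (t + 1 - 1) = B (t + 1) * ordProd B t 0 (t - 1) := by
        rw [hOP (t + 1) (by omega), hQrec t, ← hOP t ht]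
      rw [hstep (t + 1) (by omega), ih, h1, Matrix.mulVec_mulVec]
  -- integrability of v'
  have hv'I : ∀ t, Integrable (v' t) μ := by
    intro t
    have : Integrable (fun ω => y t ω - Z.mulVec (a' t ω)) μ :=
      (hyI t).sub (integrable_mulVec Z (ha'I t))
    exact this.congr (Filter.Eventually.of_forall fun ω => (hv' t ω).symm)
  -- vector-valued formula for E[v'_{t+1}]
  have hmain : ∀ t, 1 ≤ t →
      ∫ ω, v' (t + 1) ω ∂μ
        = (Z * ordProd B t 0 (t - 1)).mulVec (a₁ - a₁') := by
    intro t ht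
    calc ∫ ω, v' (t + 1) ω ∂μ
        = ∫ ω, (y (t + 1) ω - Z.mulVec (a' (t + 1) ω)) ∂μ :=
          integral_congr_ae (Filter.Eventually.of_forall fun ω => hv' (t + 1) ω)
      _ = (∫ ω, y (t + 1) ω ∂μ) - ∫ ω, Z.mulVec (a' (t + 1) ω) ∂μ :=
          integral_sub (hyI (t + 1)) (integrable_mulVec Z (ha'I (t + 1)))
      _ = Z.mulVec (∫ ω, a (t + 1) ω ∂μ) - Z.mulVec (∫ ω, a' (t + 1) ω ∂μ) := by
          rw [hy_int (t + 1) (by omega), integral_mulVec Z (ha'I (t + 1))]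
      _ = Z.mulVec ((∫ ω, a (t + 1) ω ∂μ) - (∫ ω, a' (t + 1) ω ∂μ)) := by
          rw [Matrix.mulVec_sub]
      _ = (Z * ordProd B t 0 (t - 1)).mulVec (a₁ - a₁') := by
          rw [hE t ht, Matrix.mulVec_mulVec]
  have hpart1 : ∀ t : ℕ, 1 ≤ t →
      (fun i => ∫ ω, v' (t + 1) ω i ∂μ)
        = (Z * ordProd B t 0 (t - 1)).mulVec (a₁ - a₁') := by
    intro t ht
    funext i
    rw [integral_component (hv'I (t + 1)) i, hmain t ht]
  refine ⟨hpart1, ?_⟩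
  -- Part 2
  intro hfro i
  -- entrywise convergence of the ordered products
  have hPmat : Tendsto (fun t : ℕ => ordProd B t 0 (t - 1)) atTop (nhds 0) := by
    refine tendsto_pi_nhds.2 ?_
    intro j
    refine tendsto_pi_nhds.2 ?_
    intro k
    have hlow : Tendsto (fun t : ℕ => -frobNorm (ordProd B t 0 (t - 1))) atTop (nhds 0) := by
      simpa using hfro.neg
    have h0 : (0 : Matrix (Fin p) (Fin p) ℝ) j k = 0 := rfl
    rw [h0]
    refine tendsto_of_tendsto_of_tendsto_of_le_of_le hlow hfro ?_ ?_
    · intro t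
      have := abs_entry_le_frobNorm (ordProd B t 0 (t - 1)) j k
      exact neg_le_of_abs_le this
    · intro t
      exact le_of_abs_le (abs_entry_le_frobNorm (ordProd B t 0 (t - 1)) j k)
  -- continuity of the linear readout
  have hcont : Continuous fun M : Matrix (Fin p) (Fin p) ℝ =>
      ((Z * M).mulVec (a₁ - a₁')) i := by
    have h1 : Continuous fun M : Matrix (Fin p) (Fin p) ℝ =>
        (Z * M).mulVec (a₁ - a₁') :=
      (continuous_const.matrix_mul continuous_id).matrix_mulVec continuous_const
    exact (continuous_apply i).comp h1
  have hg : Tendsto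
      (fun t : ℕ => ((Z * ordProd B t 0 (t - 1)).mulVec (a₁ - a₁')) i) atTop (nhds 0) := by
    have := (hcont.tendsto 0).comp hPmat
    simpa [Function.comp_def, Matrix.mul_zero, Matrix.zero_mulVec] using this
  have hg' : Tendsto
      (fun t : ℕ => ((Z * ordProd B (t - 1) 0 (t - 1 - 1)).mulVec (a₁ - a₁')) i)
      atTop (nhds 0) := hg.comp (tendsto_sub_atTop_nat 1)
  refine Tendsto.congr' ?_ hg'
  filter_upwards [eventually_ge_atTop 2] with t ht
  have ht1 : 1 ≤ t - 1 := by omega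
  have h := congrFun (hpart1 (t - 1) ht1) i
  rw [show t - 1 + 1 = t from by omega] at h
  exact h.symm
end

section
/- Let (B_t)_{t≥1}, B, (A_t)_{t≥1}, A be p×p real matrices satisfying: (i) there exist M₁ > 0 and r₁ ∈ (0,1) with ‖B_t − B‖_F ≤ M₁ r₁ᵗ for all t ≥ 1 and ‖Bᵏ‖_F ≤ M₁ r₁ᵏ for all k ≥ 0; (ii) there exists M₃ > 0 such that ‖∏_{i=k}^{l} B_{t−i}‖_F ≤ M₃ for all 0 ≤ k ≤ l < t; (iii) there exist M₂ > 0 and r₂ ∈ (0,1) with ‖A_t − A‖_F ≤ M₂ r₂ᵗ for all t ≥ 1. Then the series S*_∞ := Σ_{j=0}^{∞} B^{j+1} A (B^{j+1})ᵀ converges (absolutely in Frobenius norm), and the matrices S_t := Σ_{j=0}^{t−2} (B_t B_{t−1} ⋯ B_{t−j}) A_{t−j−1} (B_t B_{t−1} ⋯ B_{t−j})ᵀ converge to S*_∞ as t → ∞. -/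
open Matrix Set Filter

section frobLemmas

variable {l m n : Type*} [Fintype l] [Fintype m] [Fintype n]

attribute [local instance] Matrix.frobeniusSeminormedAddCommGroup
  Matrix.frobeniusNormedAddCommGroup Matrix.frobeniusNormedRing

lemma frobNorm_eq (A : Matrix m n ℝ) : frobNorm A = ‖A‖ := by
  rw [Matrix.frobenius_norm_def, frobNorm, Matrix.trace]
  simp only [Matrix.diag_apply, Matrix.mul_apply, Matrix.transpose_apply]
  rw [Real.sqrt_eq_rpow]
  congr 1
  refine Finset.sum_congr rfl fun i _ => Finset.sum_congr rfl fun j _ => ?_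
  rw [Real.norm_eq_abs, Real.rpow_two, sq_abs, sq]

lemma frobNorm_nonneg (A : Matrix m n ℝ) : 0 ≤ frobNorm A := Real.sqrt_nonneg _

lemma frobNorm_transpose (A : Matrix m n ℝ) : frobNorm Aᵀ = frobNorm A := by
  rw [frobNorm_eq, frobNorm_eq, Matrix.frobenius_norm_transpose]

lemma frobNorm_mul_le (A : Matrix l m ℝ) (B : Matrix m n ℝ) :
    frobNorm (A * B) ≤ frobNorm A * frobNorm B := by
  rw [frobNorm_eq, frobNorm_eq, frobNorm_eq]; exact Matrix.frobenius_norm_mul A B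

lemma frobNorm_add_le (A B : Matrix m n ℝ) : frobNorm (A + B) ≤ frobNorm A + frobNorm B := by
  simp_rw [frobNorm_eq]; exact norm_add_le A B

lemma frobNorm_sum_le {ι : Type*} (s : Finset ι) (f : ι → Matrix m n ℝ) :
    frobNorm (∑ i ∈ s, f i) ≤ ∑ i ∈ s, frobNorm (f i) := by
  simp_rw [frobNorm_eq]; exact norm_sum_le s f

end frobLemmas

lemma frobNorm_mul3_le {p : ℕ} (X Y Z : Matrix (Fin p) (Fin p) ℝ) :
    frobNorm (X * Y * Zᵀ) ≤ frobNorm X * frobNorm Y * frobNorm Z := by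
  calc frobNorm (X * Y * Zᵀ) ≤ frobNorm (X * Y) * frobNorm Zᵀ := frobNorm_mul_le _ _
    _ ≤ frobNorm X * frobNorm Y * frobNorm Zᵀ :=
        mul_le_mul_of_nonneg_right (frobNorm_mul_le _ _) (frobNorm_nonneg _)
    _ = frobNorm X * frobNorm Y * frobNorm Z := by rw [frobNorm_transpose]

section ordProdLemmas

variable {p : ℕ} (B : ℕ → Matrix (Fin p) (Fin p) ℝ) (Blim : Matrix (Fin p) (Fin p) ℝ)

lemma ordProd_zero (t : ℕ) : ordProd B t 0 0 = B t := by
  simp [ordProd, List.range_succ]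

lemma ordProd_succ (t j : ℕ) : ordProd B t 0 (j+1) = ordProd B t 0 j * B (t - (j+1)) := by
  unfold ordProd
  rw [Nat.sub_zero, Nat.sub_zero, List.range_succ, List.map_append, List.prod_append]
  simp

lemma ordProd_split (t d j : ℕ) (hd : 1 ≤ d) (hdj : d ≤ j) :
    ordProd B t 0 j = ordProd B t 0 (d-1) * ordProd B t d j := by
  unfold ordProd
  rw [Nat.sub_zero, Nat.sub_zero, show d - 1 + 1 = d from by omega,
    show j + 1 = d + (j - d + 1) by omega, List.range_add, List.map_append, List.prod_append,
    List.map_map]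
  congr 1
  simp [Function.comp_def]

lemma ordProd_telescope (t j : ℕ) :
    ordProd B t 0 j - Blim^(j+1) =
      (B t - Blim) * Blim^j
      + ∑ i ∈ Finset.range j, ordProd B t 0 i * (B (t-(i+1)) - Blim) * Blim^(j-1-i) := by
  induction j with
  | zero => simp [ordProd_zero]
  | succ j ih =>
    have key : ordProd B t 0 (j+1) - Blim^(j+1+1) =
        ordProd B t 0 j * (B (t-(j+1)) - Blim) + (ordProd B t 0 j - Blim^(j+1)) * Blim := by
      rw [ordProd_succ, pow_succ]
      noncomm_ring
    rw [key, ih, add_mul, Finset.sum_mul, Finset.sum_range_succ]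
    have h1 : ∀ i ∈ Finset.range j,
        ordProd B t 0 i * (B (t-(i+1)) - Blim) * Blim^(j-1-i) * Blim
        = ordProd B t 0 i * (B (t-(i+1)) - Blim) * Blim^(j+1-1-i) := by
      intro i hi
      rw [mul_assoc, ← pow_succ]
      congr 2
      have := Finset.mem_range.mp hi; omega
    rw [Finset.sum_congr rfl h1, mul_assoc, ← pow_succ]
    have h2 : j + 1 - 1 - j = 0 := by omega
    rw [h2, pow_zero, mul_one]
    abel

end ordProdLemmas

/-- Under hypotheses (i), (ii) on `(B_t)`, `B` and geometric convergence
`A_t → A`, the series `S*_∞ = Σ_{j≥0} B^{j+1} A (B^{j+1})ᵀ` converges absolutely in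
Frobenius norm, and `S_t = Σ_{j=0}^{t−2} (B_t ⋯ B_{t−j}) A_{t−j−1} (B_t ⋯ B_{t−j})ᵀ`
converges to `S*_∞` as `t → ∞`. -/
theorem partial_sums_tendsto_series_limit
    {p : ℕ} (B : ℕ → Matrix (Fin p) (Fin p) ℝ) (Blim : Matrix (Fin p) (Fin p) ℝ)
    (A : ℕ → Matrix (Fin p) (Fin p) ℝ) (Alim : Matrix (Fin p) (Fin p) ℝ)
    (M₁ r₁ : ℝ) (hM₁ : 0 < M₁) (hr₁ : r₁ ∈ Ioo (0 : ℝ) 1)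
    (hB : ∀ t : ℕ, 1 ≤ t → frobNorm (B t - Blim) ≤ M₁ * r₁ ^ t)
    (hBpow : ∀ k : ℕ, frobNorm (Blim ^ k) ≤ M₁ * r₁ ^ k)
    (M₃ : ℝ) (hM₃ : 0 < M₃)
    (hbdd : ∀ t k l : ℕ, k ≤ l → l < t → frobNorm (ordProd B t k l) ≤ M₃)
    (M₂ r₂ : ℝ) (hM₂ : 0 < M₂) (hr₂ : r₂ ∈ Ioo (0 : ℝ) 1)
    (hA : ∀ t : ℕ, 1 ≤ t → frobNorm (A t - Alim) ≤ M₂ * r₂ ^ t) :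
    ∃ Sinf : Matrix (Fin p) (Fin p) ℝ,
      (Summable fun j : ℕ => frobNorm (Blim ^ (j + 1) * Alim * (Blim ^ (j + 1))ᵀ)) ∧
      HasSum (fun j : ℕ => Blim ^ (j + 1) * Alim * (Blim ^ (j + 1))ᵀ) Sinf ∧
      Tendsto (fun t : ℕ =>
          frobNorm ((∑ j ∈ Finset.range (t - 1),
            ordProd B t 0 j * A (t - j - 1) * (ordProd B t 0 j)ᵀ) - Sinf))
        atTop (nhds 0) := by
  obtain ⟨hr₁0, hr₁1⟩ := hr₁
  obtain ⟨hr₂0, hr₂1⟩ := hr₂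
  set L : ℕ → Matrix (Fin p) (Fin p) ℝ := fun j => Blim ^ (j+1) * Alim * (Blim ^ (j+1))ᵀ
    with hL
  have hAl : 0 ≤ frobNorm Alim := frobNorm_nonneg _
  have hr₁sq0 : (0:ℝ) ≤ r₁^2 := sq_nonneg r₁
  have hr₁sq1 : r₁^2 < 1 := by nlinarith
  have h01 : 0 < 1 - r₁^2 := by linarith
  -- bound on the limit terms
  have hLb : ∀ j : ℕ, frobNorm (L j) ≤ (M₁ * M₁ * frobNorm Alim) * (r₁^2)^j := by
    intro j
    have b1 := frobNorm_mul3_le (Blim^(j+1)) Alim (Blim^(j+1))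
    have b2 := hBpow (j+1)
    have hpn : (0:ℝ) ≤ r₁^(j+1) := pow_nonneg hr₁0.le _
    have hfp : (0:ℝ) ≤ frobNorm (Blim^(j+1)) := frobNorm_nonneg _
    have key : frobNorm (Blim^(j+1)) * frobNorm Alim * frobNorm (Blim^(j+1))
        ≤ (M₁ * r₁^(j+1)) * frobNorm Alim * (M₁ * r₁^(j+1)) := by
      apply mul_le_mul
      · exact mul_le_mul_of_nonneg_right b2 hAl
      · exact b2
      · exact hfp
      · exact mul_nonneg (mul_nonneg hM₁.le hpn) hAl
    have e1 : (M₁ * r₁^(j+1)) * frobNorm Alim * (M₁ * r₁^(j+1))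
        = (M₁ * M₁ * frobNorm Alim) * ((r₁^2)^(j+1)) := by
      rw [← pow_mul]
      ring_nf
    have e2 : ((r₁^2):ℝ)^(j+1) ≤ (r₁^2)^j :=
      pow_le_pow_of_le_one hr₁sq0 hr₁sq1.le (by omega)
    calc frobNorm (L j) ≤ frobNorm (Blim^(j+1)) * frobNorm Alim * frobNorm (Blim^(j+1)) := b1
      _ ≤ (M₁ * r₁^(j+1)) * frobNorm Alim * (M₁ * r₁^(j+1)) := key
      _ = (M₁ * M₁ * frobNorm Alim) * ((r₁^2)^(j+1)) := e1
      _ ≤ (M₁ * M₁ * frobNorm Alim) * (r₁^2)^j := by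
          apply mul_le_mul_of_nonneg_left e2
          exact mul_nonneg (mul_nonneg hM₁.le hM₁.le) hAl
  -- geometric sum bound
  have geo : ∀ n : ℕ, ∑ k ∈ Finset.range n, (r₁^2)^k ≤ 1/(1 - r₁^2) := by
    intro n
    rw [one_div]
    calc ∑ k ∈ Finset.range n, (r₁^2)^k ≤ ∑' k : ℕ, (r₁^2)^k :=
          Summable.sum_le_tsum _ (fun k _ => pow_nonneg hr₁sq0 k)
            (summable_geometric_of_lt_one hr₁sq0 hr₁sq1)
      _ = (1 - r₁^2)⁻¹ := tsum_geometric_of_lt_one hr₁sq0 hr₁sq1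
  set C := M₁*M₁ + M₃*M₁*M₁ / (1 - r₁^2) with hCdef
  have hC0 : 0 < C := by
    have h1 : 0 < M₁ * M₁ := mul_pos hM₁ hM₁
    have h2 : 0 < M₃*M₁*M₁ / (1 - r₁^2) := div_pos (mul_pos (mul_pos hM₃ hM₁) hM₁) h01
    rw [hCdef]; linarith
  -- Lemma A
  have lemA : ∀ t j : ℕ, 1 ≤ t → j + 1 ≤ t →
      frobNorm (ordProd B t 0 j - Blim^(j+1)) ≤ C * r₁^(t-j) := by
    intro t j ht htj
    rw [ordProd_telescope]
    have hz : (0:ℝ) ≤ r₁^(t-j) := pow_nonneg hr₁0.le _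
    have hb1 : frobNorm ((B t - Blim) * Blim^j) ≤ (M₁ * r₁^t) * (M₁ * r₁^j) :=
      le_trans (frobNorm_mul_le _ _)
        (mul_le_mul (hB t ht) (hBpow j) (frobNorm_nonneg _)
          (mul_nonneg hM₁.le (pow_nonneg hr₁0.le _)))
    have hb2 : frobNorm (∑ i ∈ Finset.range j,
          ordProd B t 0 i * (B (t-(i+1)) - Blim) * Blim^(j-1-i))
        ≤ ∑ i ∈ Finset.range j, M₃ * (M₁ * r₁^(t-(i+1))) * (M₁ * r₁^(j-1-i)) := by
      refine le_trans (frobNorm_sum_le _ _) (Finset.sum_le_sum fun i hi => ?_)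
      have hij := Finset.mem_range.mp hi
      refine le_trans (frobNorm_mul_le _ _) ?_
      refine mul_le_mul ?_ (hBpow _) (frobNorm_nonneg _)
        (mul_nonneg hM₃.le (mul_nonneg hM₁.le (pow_nonneg hr₁0.le _)))
      exact le_trans (frobNorm_mul_le _ _)
        (mul_le_mul (hbdd t 0 i (Nat.zero_le _) (by omega)) (hB _ (by omega))
          (frobNorm_nonneg _) hM₃.le)
    have e0 : ∀ i ∈ Finset.range j, M₃ * (M₁ * r₁^(t-(i+1))) * (M₁ * r₁^(j-1-i))
        = (M₃*M₁*M₁) * ((r₁^2)^(j-1-i) * r₁^(t-j)) := by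
      intro i hi
      have hij := Finset.mem_range.mp hi
      have h : r₁^(t-(i+1)) * r₁^(j-1-i) = (r₁^2)^(j-1-i) * r₁^(t-j) := by
        rw [← pow_add, ← pow_mul, ← pow_add]
        congr 1
        omega
      calc M₃ * (M₁ * r₁^(t-(i+1))) * (M₁ * r₁^(j-1-i))
          = (M₃*M₁*M₁) * (r₁^(t-(i+1)) * r₁^(j-1-i)) := by ring
        _ = (M₃*M₁*M₁) * ((r₁^2)^(j-1-i) * r₁^(t-j)) := by rw [h]
    have hb3 : ∑ i ∈ Finset.range j, M₃ * (M₁ * r₁^(t-(i+1))) * (M₁ * r₁^(j-1-i))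
        ≤ (M₃*M₁*M₁) * ((1/(1-r₁^2)) * r₁^(t-j)) := by
      rw [Finset.sum_congr rfl e0, ← Finset.mul_sum, ← Finset.sum_mul,
        Finset.sum_range_reflect (fun k => (r₁^2)^k) j]
      refine mul_le_mul_of_nonneg_left
        (mul_le_mul_of_nonneg_right (geo j) hz)
        (mul_nonneg (mul_nonneg hM₃.le hM₁.le) hM₁.le)
    have hb4 : (M₁ * r₁^t) * (M₁ * r₁^j) ≤ (M₁*M₁) * r₁^(t-j) := by
      have h : r₁^t * r₁^j = (r₁^2)^j * r₁^(t-j) := by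
        rw [← pow_add, ← pow_mul, ← pow_add]
        congr 1
        omega
      have h2 : ((r₁^2):ℝ)^j ≤ 1 := pow_le_one₀ hr₁sq0 hr₁sq1.le
      calc (M₁ * r₁^t) * (M₁ * r₁^j) = (M₁*M₁) * ((r₁^2)^j * r₁^(t-j)) := by
            rw [show (M₁ * r₁^t) * (M₁ * r₁^j) = (M₁*M₁) * (r₁^t * r₁^j) from by ring, h]
        _ ≤ (M₁*M₁) * (1 * r₁^(t-j)) :=
            mul_le_mul_of_nonneg_left (mul_le_mul_of_nonneg_right h2 hz)
              (mul_nonneg hM₁.le hM₁.le)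
        _ = (M₁*M₁) * r₁^(t-j) := by rw [one_mul]
    calc frobNorm ((B t - Blim) * Blim^j + ∑ i ∈ Finset.range j,
            ordProd B t 0 i * (B (t-(i+1)) - Blim) * Blim^(j-1-i))
        ≤ frobNorm ((B t - Blim) * Blim^j) + frobNorm (∑ i ∈ Finset.range j,
            ordProd B t 0 i * (B (t-(i+1)) - Blim) * Blim^(j-1-i)) := frobNorm_add_le _ _
      _ ≤ (M₁ * r₁^t) * (M₁ * r₁^j) + ∑ i ∈ Finset.range j,
            M₃ * (M₁ * r₁^(t-(i+1))) * (M₁ * r₁^(j-1-i)) := add_le_add hb1 hb2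
      _ ≤ (M₁*M₁) * r₁^(t-j) + (M₃*M₁*M₁) * ((1/(1-r₁^2)) * r₁^(t-j)) := add_le_add hb4 hb3
      _ = C * r₁^(t-j) := by rw [hCdef]; field_simp
  -- Lemma B : decay of the ordered products
  set Q := (M₁ + C) * max M₃ 1 with hQdef
  have hQ0 : 0 < Q := mul_pos (by linarith) (lt_of_lt_of_le one_pos (le_max_right _ _))
  have lemB : ∀ t j : ℕ, 1 ≤ t → j + 1 ≤ t →
      frobNorm (ordProd B t 0 j) ≤ Q * r₁^(min (j+1) ((t+1)/2)) := by
    intro t j ht htj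
    set h := (t+1)/2 with hhdef
    have hh1 : 1 ≤ h := by omega
    have hmax1 : (1:ℝ) ≤ max M₃ 1 := le_max_right _ _
    by_cases hc : j + 1 ≤ h
    · have hmin : min (j+1) h = j+1 := by omega
      rw [hmin]
      have tri : frobNorm (ordProd B t 0 j)
          ≤ frobNorm (Blim^(j+1)) + frobNorm (ordProd B t 0 j - Blim^(j+1)) := by
        have := frobNorm_add_le (Blim^(j+1)) (ordProd B t 0 j - Blim^(j+1))
        simpa using this
      have h2 : frobNorm (ordProd B t 0 j - Blim^(j+1)) ≤ C * r₁^(j+1) := by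
        refine le_trans (lemA t j ht htj) (mul_le_mul_of_nonneg_left ?_ hC0.le)
        exact pow_le_pow_of_le_one hr₁0.le hr₁1.le (by omega)
      have h3 : (0:ℝ) ≤ r₁^(j+1) := pow_nonneg hr₁0.le _
      calc frobNorm (ordProd B t 0 j)
          ≤ M₁ * r₁^(j+1) + C * r₁^(j+1) := le_trans tri (add_le_add (hBpow (j+1)) h2)
        _ = (M₁ + C) * r₁^(j+1) := by ring
        _ ≤ Q * r₁^(j+1) := by
            rw [hQdef]
            nlinarith [mul_nonneg (by linarith : (0:ℝ) ≤ M₁ + C) h3]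
    · have hmin : min (j+1) h = h := by omega
      rw [hmin, ordProd_split B t h j hh1 (by omega)]
      have e1 : h - 1 + 1 = h := by omega
      have hpre : frobNorm (ordProd B t 0 (h-1)) ≤ (M₁ + C) * r₁^h := by
        have tri : frobNorm (ordProd B t 0 (h-1))
            ≤ frobNorm (Blim^(h-1+1)) + frobNorm (ordProd B t 0 (h-1) - Blim^(h-1+1)) := by
          have := frobNorm_add_le (Blim^(h-1+1)) (ordProd B t 0 (h-1) - Blim^(h-1+1))
          simpa using this
        have hA1 : frobNorm (ordProd B t 0 (h-1) - Blim^(h-1+1)) ≤ C * r₁^h := by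
          refine le_trans (lemA t (h-1) ht (by omega)) (mul_le_mul_of_nonneg_left ?_ hC0.le)
          exact pow_le_pow_of_le_one hr₁0.le hr₁1.le (by omega)
        have hB1 : frobNorm (Blim^(h-1+1)) ≤ M₁ * r₁^h := by
          rw [e1]; exact hBpow h
        calc frobNorm (ordProd B t 0 (h-1)) ≤ M₁ * r₁^h + C * r₁^h :=
              le_trans tri (add_le_add hB1 hA1)
          _ = (M₁ + C) * r₁^h := by ring
      have hsuf : frobNorm (ordProd B t h j) ≤ M₃ := hbdd t h j (by omega) (by omega)
      calc frobNorm (ordProd B t 0 (h-1) * ordProd B t h j)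
          ≤ frobNorm (ordProd B t 0 (h-1)) * frobNorm (ordProd B t h j) := frobNorm_mul_le _ _
        _ ≤ ((M₁ + C) * r₁^h) * M₃ :=
            mul_le_mul hpre hsuf (frobNorm_nonneg _)
              (mul_nonneg (by linarith) (pow_nonneg hr₁0.le _))
        _ ≤ Q * r₁^h := by
            rw [hQdef]
            have h3 : (0:ℝ) ≤ r₁^h := pow_nonneg hr₁0.le _
            have h4 : M₃ ≤ max M₃ 1 := le_max_left _ _
            nlinarith [mul_nonneg (by linarith : (0:ℝ) ≤ M₁ + C) h3]
  -- combined rate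
  set r := max r₁ r₂ with hrdef
  have hr0 : 0 < r := lt_of_lt_of_le hr₁0 (le_max_left _ _)
  have hr1 : r < 1 := max_lt hr₁1 hr₂1
  have hpow12 : ∀ a b e : ℕ, e ≤ a + b → r₁^a * r₂^b ≤ r^e := by
    intro a b e he
    calc r₁^a * r₂^b ≤ r^a * r^b :=
          mul_le_mul (pow_le_pow_left₀ hr₁0.le (le_max_left _ _) a)
            (pow_le_pow_left₀ hr₂0.le (le_max_right _ _) b)
            (pow_nonneg hr₂0.le b) (pow_nonneg hr0.le a)
      _ = r^(a+b) := (pow_add r a b).symm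
      _ ≤ r^e := pow_le_pow_of_le_one hr0.le hr1.le he
  have hpow1 : ∀ a e : ℕ, e ≤ a → r₁^a ≤ r^e := by
    intro a e he
    simpa using hpow12 a 0 e (by omega)
  set K := Q*Q*M₂ + C * frobNorm Alim * Q + M₁ * frobNorm Alim * C with hKdef
  have hK0 : 0 ≤ K := by
    rw [hKdef]
    have h1 : (0:ℝ) ≤ Q*Q*M₂ := mul_nonneg (mul_nonneg hQ0.le hQ0.le) hM₂.le
    have h2 : (0:ℝ) ≤ C * frobNorm Alim * Q := mul_nonneg (mul_nonneg hC0.le hAl) hQ0.le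
    have h3 : (0:ℝ) ≤ M₁ * frobNorm Alim * C := mul_nonneg (mul_nonneg hM₁.le hAl) hC0.le
    linarith
  -- Lemma C : per-term bound
  have lemC : ∀ t j : ℕ, j + 2 ≤ t →
      frobNorm (ordProd B t 0 j * A (t - j - 1) * (ordProd B t 0 j)ᵀ - L j)
        ≤ K * r^((t+1)/2) := by
    intro t j htj
    have ht1 : 1 ≤ t := by omega
    set P := ordProd B t 0 j with hPdef
    set Bp := Blim^(j+1) with hBpdef
    set h := (t+1)/2 with hhdef
    set m := min (j+1) h with hmdef
    have hid : P * A (t - j - 1) * Pᵀ - L j =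
        P * (A (t-j-1) - Alim) * Pᵀ + ((P - Bp) * Alim * Pᵀ + Bp * Alim * (P - Bp)ᵀ) := by
      show P * A (t - j - 1) * Pᵀ - Bp * Alim * Bpᵀ = _
      rw [transpose_sub]
      noncomm_ring
    rw [hid]
    have hfP : frobNorm P ≤ Q * r₁^m := lemB t j ht1 (by omega)
    have hfPBp : frobNorm (P - Bp) ≤ C * r₁^(t-j) := lemA t j ht1 (by omega)
    have hfBp : frobNorm Bp ≤ M₁ * r₁^(j+1) := hBpow (j+1)
    have hAs : frobNorm (A (t-j-1) - Alim) ≤ M₂ * r₂^(t-j-1) := hA _ (by omega)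
    have hQr : (0:ℝ) ≤ Q * r₁^m := mul_nonneg hQ0.le (pow_nonneg hr₁0.le _)
    have hCr : (0:ℝ) ≤ C * r₁^(t-j) := mul_nonneg hC0.le (pow_nonneg hr₁0.le _)
    have hMr : (0:ℝ) ≤ M₁ * r₁^(j+1) := mul_nonneg hM₁.le (pow_nonneg hr₁0.le _)
    have hM2r : (0:ℝ) ≤ M₂ * r₂^(t-j-1) := mul_nonneg hM₂.le (pow_nonneg hr₂0.le _)
    have n1 : frobNorm (P * (A (t-j-1) - Alim) * Pᵀ) ≤ (Q*Q*M₂) * r^h := by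
      calc frobNorm (P * (A (t-j-1) - Alim) * Pᵀ)
          ≤ frobNorm P * frobNorm (A (t-j-1) - Alim) * frobNorm P := frobNorm_mul3_le _ _ _
        _ ≤ (Q * r₁^m) * (M₂ * r₂^(t-j-1)) * (Q * r₁^m) :=
            mul_le_mul (mul_le_mul hfP hAs (frobNorm_nonneg _) hQr) hfP (frobNorm_nonneg _)
              (mul_nonneg hQr hM2r)
        _ = (Q*Q*M₂) * (r₁^(m+m) * r₂^(t-j-1)) := by rw [pow_add]; ring
        _ ≤ (Q*Q*M₂) * r^h :=
            mul_le_mul_of_nonneg_left (hpow12 (m+m) (t-j-1) h (by omega))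
              (mul_nonneg (mul_nonneg hQ0.le hQ0.le) hM₂.le)
    have n2 : frobNorm ((P - Bp) * Alim * Pᵀ) ≤ (C * frobNorm Alim * Q) * r^h := by
      calc frobNorm ((P - Bp) * Alim * Pᵀ)
          ≤ frobNorm (P - Bp) * frobNorm Alim * frobNorm P := frobNorm_mul3_le _ _ _
        _ ≤ (C * r₁^(t-j)) * frobNorm Alim * (Q * r₁^m) :=
            mul_le_mul (mul_le_mul hfPBp le_rfl hAl hCr) hfP (frobNorm_nonneg _)
              (mul_nonneg hCr hAl)
        _ = (C * frobNorm Alim * Q) * r₁^((t-j)+m) := by rw [pow_add]; ring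
        _ ≤ (C * frobNorm Alim * Q) * r^h :=
            mul_le_mul_of_nonneg_left (hpow1 ((t-j)+m) h (by omega))
              (mul_nonneg (mul_nonneg hC0.le hAl) hQ0.le)
    have n3 : frobNorm (Bp * Alim * (P - Bp)ᵀ) ≤ (M₁ * frobNorm Alim * C) * r^h := by
      calc frobNorm (Bp * Alim * (P - Bp)ᵀ)
          ≤ frobNorm Bp * frobNorm Alim * frobNorm (P - Bp) := frobNorm_mul3_le _ _ _
        _ ≤ (M₁ * r₁^(j+1)) * frobNorm Alim * (C * r₁^(t-j)) :=
            mul_le_mul (mul_le_mul hfBp le_rfl hAl hMr) hfPBp (frobNorm_nonneg _)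
              (mul_nonneg hMr hAl)
        _ = (M₁ * frobNorm Alim * C) * r₁^((j+1)+(t-j)) := by rw [pow_add]; ring
        _ ≤ (M₁ * frobNorm Alim * C) * r^h :=
            mul_le_mul_of_nonneg_left (hpow1 ((j+1)+(t-j)) h (by omega))
              (mul_nonneg (mul_nonneg hM₁.le hAl) hC0.le)
    calc frobNorm (P * (A (t-j-1) - Alim) * Pᵀ + ((P - Bp) * Alim * Pᵀ + Bp * Alim * (P - Bp)ᵀ))
        ≤ frobNorm (P * (A (t-j-1) - Alim) * Pᵀ)
          + (frobNorm ((P - Bp) * Alim * Pᵀ) + frobNorm (Bp * Alim * (P - Bp)ᵀ)) :=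
          le_trans (frobNorm_add_le _ _) (add_le_add le_rfl (frobNorm_add_le _ _))
      _ ≤ (Q*Q*M₂) * r^h + ((C * frobNorm Alim * Q) * r^h + (M₁ * frobNorm Alim * C) * r^h) :=
          add_le_add n1 (add_le_add n2 n3)
      _ = K * r^h := by rw [hKdef]; ring
  -- summability of the limit series
  letI : NormedAddCommGroup (Matrix (Fin p) (Fin p) ℝ) := Matrix.frobeniusNormedAddCommGroup
  have hsum : Summable fun j => frobNorm (L j) := by
    apply Summable.of_nonneg_of_le (fun j => frobNorm_nonneg _) hLb
    exact ((summable_geometric_of_lt_one hr₁sq0 hr₁sq1).mul_left _)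
  have hsumL : Summable L := by
    letI : NormedSpace ℝ (Matrix (Fin p) (Fin p) ℝ) := Matrix.frobeniusNormedSpace
    haveI : CompleteSpace (Matrix (Fin p) (Fin p) ℝ) := FiniteDimensional.complete ℝ _
    apply Summable.of_norm
    simpa [← frobNorm_eq] using hsum
  refine ⟨∑' j, L j, hsum, hsumL.hasSum, ?_⟩
  set Sinf := ∑' j, L j with hSinf
  have hpart : Tendsto (fun n => frobNorm ((∑ j ∈ Finset.range n, L j) - Sinf)) atTop (nhds 0) := by
    have h1 := hsumL.hasSum.tendsto_sum_nat
    rw [← tendsto_sub_nhds_zero_iff] at h1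
    simpa [frobNorm_eq] using h1.norm
  have key : ∀ t : ℕ,
      frobNorm ((∑ j ∈ Finset.range (t-1),
          ordProd B t 0 j * A (t - j - 1) * (ordProd B t 0 j)ᵀ) - Sinf)
      ≤ (t:ℝ) * (K * r^((t+1)/2)) + frobNorm ((∑ j ∈ Finset.range (t-1), L j) - Sinf) := by
    intro t
    have split : (∑ j ∈ Finset.range (t-1),
          ordProd B t 0 j * A (t - j - 1) * (ordProd B t 0 j)ᵀ) - Sinf
        = (∑ j ∈ Finset.range (t-1),
            (ordProd B t 0 j * A (t - j - 1) * (ordProd B t 0 j)ᵀ - L j))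
          + ((∑ j ∈ Finset.range (t-1), L j) - Sinf) := by
      rw [Finset.sum_sub_distrib]; abel
    rw [split]
    refine le_trans (frobNorm_add_le _ _) (add_le_add ?_ le_rfl)
    refine le_trans (frobNorm_sum_le _ _) ?_
    have hKr : (0:ℝ) ≤ K * r^((t+1)/2) := mul_nonneg hK0 (pow_nonneg hr0.le _)
    calc ∑ j ∈ Finset.range (t-1),
          frobNorm (ordProd B t 0 j * A (t - j - 1) * (ordProd B t 0 j)ᵀ - L j)
        ≤ ∑ _j ∈ Finset.range (t-1), K * r^((t+1)/2) :=
          Finset.sum_le_sum fun j hj => lemC t j (by have := Finset.mem_range.mp hj; omega)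
      _ = ((t-1 : ℕ) : ℝ) * (K * r^((t+1)/2)) := by rw [Finset.sum_const, Finset.card_range, nsmul_eq_mul]
      _ ≤ (t:ℝ) * (K * r^((t+1)/2)) := by
          refine mul_le_mul_of_nonneg_right ?_ hKr
          exact_mod_cast Nat.sub_le t 1
  have hsr0 : 0 ≤ Real.sqrt r := Real.sqrt_nonneg r
  have hsr1 : Real.sqrt r < 1 := by
    rw [show (1:ℝ) = Real.sqrt 1 from Real.sqrt_one.symm]
    exact Real.sqrt_lt_sqrt hr0.le hr1
  have hge : ∀ t : ℕ, r^((t+1)/2) ≤ Real.sqrt r ^ t := by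
    intro t
    calc r^((t+1)/2) = (Real.sqrt r ^ 2)^((t+1)/2) := by rw [Real.sq_sqrt hr0.le]
      _ = Real.sqrt r ^ (2 * ((t+1)/2)) := (pow_mul _ 2 _).symm
      _ ≤ Real.sqrt r ^ t := pow_le_pow_of_le_one hsr0 hsr1.le (by omega)
  have gmain : Tendsto (fun t : ℕ => (t:ℝ) * Real.sqrt r ^ t) atTop (nhds 0) := by
    have h1 := summable_norm_pow_mul_geometric_of_norm_lt_one 1
      (show ‖Real.sqrt r‖ < 1 by rw [Real.norm_eq_abs, abs_of_nonneg hsr0]; exact hsr1)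
    have h2 : Summable (fun t : ℕ => (t:ℝ) * Real.sqrt r ^ t) := by
      apply Summable.of_norm; simpa using h1
    simpa using h2.tendsto_atTop_zero
  have g1 : Tendsto (fun t : ℕ => (t:ℝ) * (K * r^((t+1)/2))) atTop (nhds 0) := by
    apply squeeze_zero (g := fun t : ℕ => K * ((t:ℝ) * Real.sqrt r ^ t))
    · intro t
      exact mul_nonneg (Nat.cast_nonneg t) (mul_nonneg hK0 (pow_nonneg hr0.le _))
    · intro t
      calc (t:ℝ) * (K * r^((t+1)/2)) = (K * (t:ℝ)) * r^((t+1)/2) := by ring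
        _ ≤ (K * (t:ℝ)) * Real.sqrt r ^ t :=
            mul_le_mul_of_nonneg_left (hge t) (mul_nonneg hK0 (Nat.cast_nonneg t))
        _ = K * ((t:ℝ) * Real.sqrt r ^ t) := by ring
    · simpa using gmain.const_mul K
  have g2 : Tendsto (fun t : ℕ => frobNorm ((∑ j ∈ Finset.range (t-1), L j) - Sinf))
      atTop (nhds 0) := hpart.comp (tendsto_sub_atTop_nat 1)
  refine squeeze_zero (fun t => frobNorm_nonneg _) key ?_
  simpa using g1.add g2
end

section
/- In the time-invariant misspecified Kalman setting, assume that for some t there is a deterministic d×d matrix F_{t+1} with E[v_{t+1} v_{t+1}ᵀ | 𝔉_t] = F_{t+1} almost surely. Then the covariance matrix of v'_{t+1} satisfies the decomposition Var(v'_{t+1}) = F_{t+1} + Z · E[(a_{t+1} − a'_{t+1})(a_{t+1} − a'_{t+1})ᵀ] · Zᵀ − E[v'_{t+1}] E[v'_{t+1}]ᵀ, where Var(v'_{t+1}) := E[v'_{t+1} v'_{t+1}ᵀ] − E[v'_{t+1}] E[v'_{t+1}]ᵀ. -/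
open Matrix MeasureTheory

lemma aux_measurable_mulVec {Ω : Type*} {mΩ : MeasurableSpace Ω} {n q : ℕ}
    (M : Matrix (Fin n) (Fin q) ℝ) {f : Ω → Fin q → ℝ} (hf : Measurable[mΩ] f) :
    Measurable[mΩ] fun ω => M.mulVec (f ω) := by
  rw [measurable_pi_iff]
  intro i
  simp only [Matrix.mulVec, dotProduct]
  exact Finset.measurable_sum _ fun j _ =>
    (measurable_const.mul ((measurable_pi_apply j).comp hf))

lemma aux_integrable_mul {Ω : Type*} {m0 : MeasurableSpace Ω} {μ : Measure Ω}
    {f g : Ω → ℝ} (hf : MemLp f 2 μ) (hg : MemLp g 2 μ) :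
    Integrable (fun ω => f ω * g ω) μ := by
  have h := ((hf.integrable_sq.add hg.integrable_sq).div_const 2)
  refine h.mono' (hf.aestronglyMeasurable.mul hg.aestronglyMeasurable) ?_
  filter_upwards with ω
  have : |f ω * g ω| ≤ (f ω ^ 2 + g ω ^ 2) / 2 := by
    nlinarith [sq_nonneg (|f ω| - |g ω|), abs_mul (f ω) (g ω), abs_nonneg (f ω * g ω),
      sq_abs (f ω), sq_abs (g ω), neg_abs_le (f ω * g ω)]
  calc ‖f ω * g ω‖ = |f ω * g ω| := rfl
    _ ≤ (f ω ^ 2 + g ω ^ 2) / 2 := this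

noncomputable def ZCLM {q n : ℕ} (M : Matrix (Fin n) (Fin q) ℝ) : (Fin q → ℝ) →L[ℝ] (Fin n → ℝ) :=
  LinearMap.toContinuousLinearMap M.mulVecLin

lemma ZCLM_apply {q n : ℕ} (M : Matrix (Fin n) (Fin q) ℝ) (x : Fin q → ℝ) :
    ZCLM M x = M.mulVec x := rfl

lemma aux_memℒp_mulVec {Ω : Type*} {m0 : MeasurableSpace Ω} {μ : Measure Ω} {n q : ℕ}
    (M : Matrix (Fin n) (Fin q) ℝ) {f : Ω → Fin q → ℝ} (hf : MemLp f 2 μ) :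
    MemLp (fun ω => M.mulVec (f ω)) 2 μ :=
  (ZCLM M).comp_memLp' hf

lemma aux_memℒp_apply {Ω : Type*} {m0 : MeasurableSpace Ω} {μ : Measure Ω} {n : ℕ}
    {f : Ω → Fin n → ℝ} (hf : MemLp f 2 μ) (i : Fin n) :
    MemLp (fun ω => f ω i) 2 μ :=
  (ContinuousLinearMap.proj (R := ℝ) (φ := fun _ : Fin n => ℝ) i).comp_memLp' hf

lemma aux_meas_rec {Ω : Type*} {m0 : MeasurableSpace Ω}
    (ℱ : Filtration ℕ m0) {d p : ℕ}
    (Z : Matrix (Fin d) (Fin p) ℝ) (T : Matrix (Fin p) (Fin p) ℝ)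
    (Kb : ℕ → Matrix (Fin p) (Fin d) ℝ)
    (y : ℕ → Ω → Fin d → ℝ)
    (hy_meas : ∀ t, StronglyMeasurable[ℱ t] (y t))
    (b : ℕ → Ω → Fin p → ℝ) (b₁ : Fin p → ℝ)
    (hb1 : ∀ ω, b 1 ω = b₁)
    (hb : ∀ s, 1 ≤ s → ∀ ω,
      b (s + 1) ω = T.mulVec (b s ω) + T.mulVec ((Kb s).mulVec (y s ω - Z.mulVec (b s ω)))) :
    ∀ s, 1 ≤ s → Measurable[ℱ s] (b (s + 1)) := by
  have step : ∀ s, 1 ≤ s → Measurable[ℱ s] (b s) → Measurable[ℱ s] (b (s + 1)) := by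
    intro s hs hbs
    have hy : Measurable[ℱ s] (y s) := (hy_meas s).measurable
    have : b (s + 1) = fun ω =>
        T.mulVec (b s ω) + T.mulVec ((Kb s).mulVec (y s ω - Z.mulVec (b s ω))) :=
      funext (hb s hs)
    rw [this]
    exact (aux_measurable_mulVec T hbs).add
      (aux_measurable_mulVec T (aux_measurable_mulVec (Kb s)
        (hy.sub (aux_measurable_mulVec Z hbs))))
  have hbs : ∀ s, 1 ≤ s → Measurable[ℱ s] (b s) := by
    intro s hs
    induction s with
    | zero => omega
    | succ n ih =>
      rcases Nat.lt_or_ge 1 (n + 1) with h | h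
      · have hn : 1 ≤ n := by omega
        exact ((step n hn (ih hn)).mono (ℱ.mono (Nat.le_succ n)) le_rfl)
      · have hn1 : n + 1 = 1 := by omega
        rw [hn1]
        have : b 1 = fun _ => b₁ := funext hb1
        rw [this]; exact measurable_const
  exact fun s hs => step s hs (hbs s hs)


/-- In the time-invariant misspecified Kalman setting, if
`E[v_{t+1} v_{t+1}ᵀ | 𝔉_t] = F_{t+1}` a.s. for a deterministic matrix `F_{t+1}`, then
`Var(v'_{t+1}) = F_{t+1} + Z E[(a_{t+1} − a'_{t+1})(a_{t+1} − a'_{t+1})ᵀ] Zᵀ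
  − E[v'_{t+1}] E[v'_{t+1}]ᵀ`,
where `Var(v'_{t+1}) = E[v'_{t+1} v'_{t+1}ᵀ] − E[v'_{t+1}] E[v'_{t+1}]ᵀ`. -/
theorem variance_misspecified_error_decomposition
    {Ω : Type*} {m0 : MeasurableSpace Ω} (μ : Measure Ω) [IsProbabilityMeasure μ]
    (ℱ : Filtration ℕ m0) (hℱ0 : ℱ 0 = ⊥)
    {d p : ℕ}
    (Z : Matrix (Fin d) (Fin p) ℝ) (T : Matrix (Fin p) (Fin p) ℝ)
    (K K' : ℕ → Matrix (Fin p) (Fin d) ℝ)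
    (L' : ℕ → Matrix (Fin p) (Fin p) ℝ)
    (hL' : ∀ t, L' t = 1 - K' t * Z)
    (y : ℕ → Ω → Fin d → ℝ)
    (hy_meas : ∀ t, StronglyMeasurable[ℱ t] (y t))
    (hy_L2 : ∀ t, MemLp (y t) 2 μ)
    (a a' : ℕ → Ω → Fin p → ℝ)
    (a₁ a₁' : Fin p → ℝ)
    (ha1 : ∀ ω, a 1 ω = a₁) (ha1' : ∀ ω, a' 1 ω = a₁')
    (ha : ∀ t, 1 ≤ t → ∀ ω,
      a (t + 1) ω = T.mulVec (a t ω) + T.mulVec ((K t).mulVec (y t ω - Z.mulVec (a t ω))))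
    (ha' : ∀ t, 1 ≤ t → ∀ ω,
      a' (t + 1) ω
        = T.mulVec (a' t ω) + T.mulVec ((K' t).mulVec (y t ω - Z.mulVec (a' t ω))))
    (ha_L2 : ∀ t, MemLp (a t) 2 μ) (ha'_L2 : ∀ t, MemLp (a' t) 2 μ)
    (v v' : ℕ → Ω → Fin d → ℝ)
    (hv : ∀ t ω, v t ω = y t ω - Z.mulVec (a t ω))
    (hv' : ∀ t ω, v' t ω = y t ω - Z.mulVec (a' t ω))
    (hcond : ∀ t, 1 ≤ t → μ[y t | ℱ (t - 1)] =ᵐ[μ] fun ω => Z.mulVec (a t ω))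
    (t : ℕ) (ht : 1 ≤ t)
    (F : Matrix (Fin d) (Fin d) ℝ)
    (hF : ∀ i j,
      μ[fun ω => v (t + 1) ω i * v (t + 1) ω j | ℱ t] =ᵐ[μ] fun _ => F i j) :
    (Matrix.of fun i j => ∫ ω, v' (t + 1) ω i * v' (t + 1) ω j ∂μ)
      - Matrix.of (fun i j => (∫ ω, v' (t + 1) ω i ∂μ) * ∫ ω, v' (t + 1) ω j ∂μ)
    = F
      + Z * (Matrix.of fun i j =>
          ∫ ω, (a (t + 1) ω i - a' (t + 1) ω i) * (a (t + 1) ω j - a' (t + 1) ω j) ∂μ) * Zᵀ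
      - Matrix.of (fun i j => (∫ ω, v' (t + 1) ω i ∂μ) * ∫ ω, v' (t + 1) ω j ∂μ) := by
  classical
  have hm : (ℱ t : MeasurableSpace Ω) ≤ m0 := ℱ.le t
  haveI : SigmaFinite (μ.trim hm) := by infer_instance
  -- the misspecification error and its image
  set δ : Ω → Fin p → ℝ := fun ω => a (t + 1) ω - a' (t + 1) ω with hδdef
  set w : Ω → Fin d → ℝ := fun ω => Z.mulVec (δ ω) with hwdef
  -- pointwise decomposition v' = v + w
  have hdecomp : ∀ ω, v' (t + 1) ω = v (t + 1) ω + w ω := by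
    intro ω
    rw [hv', hv, hwdef, hδdef]
    simp only [Matrix.mulVec_sub]
    abel
  -- measurability
  have hameas : Measurable[ℱ t] (a (t + 1)) :=
    aux_meas_rec ℱ Z T K y hy_meas a a₁ ha1 ha t ht
  have ha'meas : Measurable[ℱ t] (a' (t + 1)) :=
    aux_meas_rec ℱ Z T K' y hy_meas a' a₁' ha1' ha' t ht
  have hδmeas : Measurable[ℱ t] δ := hameas.sub ha'meas
  have hwmeas : Measurable[ℱ t] w := aux_measurable_mulVec Z hδmeas
  -- L² facts
  have hZa2 : MemLp (fun ω => Z.mulVec (a (t + 1) ω)) 2 μ := aux_memℒp_mulVec Z (ha_L2 (t + 1))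
  have hZa'2 : MemLp (fun ω => Z.mulVec (a' (t + 1) ω)) 2 μ := aux_memℒp_mulVec Z (ha'_L2 (t + 1))
  have hδ2 : MemLp δ 2 μ := (ha_L2 (t + 1)).sub (ha'_L2 (t + 1))
  have hw2 : MemLp w 2 μ := aux_memℒp_mulVec Z hδ2
  have hv2 : MemLp (v (t + 1)) 2 μ := by
    have : v (t + 1) = fun ω => y (t + 1) ω - Z.mulVec (a (t + 1) ω) := funext (hv (t + 1))
    rw [this]; exact (hy_L2 (t + 1)).sub hZa2
  have hv'2 : MemLp (v' (t + 1)) 2 μ := by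
    have : v' (t + 1) = fun ω => y (t + 1) ω - Z.mulVec (a' (t + 1) ω) := funext (hv' (t + 1))
    rw [this]; exact (hy_L2 (t + 1)).sub hZa'2
  have hvL2 : ∀ i, MemLp (fun ω => v (t + 1) ω i) 2 μ := fun i => aux_memℒp_apply hv2 i
  have hwL2 : ∀ i, MemLp (fun ω => w ω i) 2 μ := fun i => aux_memℒp_apply hw2 i
  have hδL2 : ∀ k, MemLp (fun ω => δ ω k) 2 μ := fun k => aux_memℒp_apply hδ2 k
  -- integrability of products
  have hvv : ∀ i j, Integrable (fun ω => v (t + 1) ω i * v (t + 1) ω j) μ :=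
    fun i j => aux_integrable_mul (hvL2 i) (hvL2 j)
  have hvw : ∀ i j, Integrable (fun ω => v (t + 1) ω i * w ω j) μ :=
    fun i j => aux_integrable_mul (hvL2 i) (hwL2 j)
  have hwv : ∀ i j, Integrable (fun ω => w ω i * v (t + 1) ω j) μ :=
    fun i j => aux_integrable_mul (hwL2 i) (hvL2 j)
  have hww : ∀ i j, Integrable (fun ω => w ω i * w ω j) μ :=
    fun i j => aux_integrable_mul (hwL2 i) (hwL2 j)
  have hδδ : ∀ k l, Integrable (fun ω => δ ω k * δ ω l) μ :=
    fun k l => aux_integrable_mul (hδL2 k) (hδL2 l)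
  -- conditional expectation of y_{t+1} componentwise
  have hy1 : Integrable (y (t + 1)) μ := (hy_L2 (t + 1)).integrable one_le_two
  have hZa1 : Integrable (fun ω => Z.mulVec (a (t + 1) ω)) μ := hZa2.integrable one_le_two
  have hcondy : μ[y (t + 1)|ℱ t] =ᵐ[μ] fun ω => Z.mulVec (a (t + 1) ω) := by
    have h := hcond (t + 1) (by omega)
    simpa using h
  have hcondyi : ∀ i,
      (fun ω => Z.mulVec (a (t + 1) ω) i) =ᵐ[μ] μ[fun ω => y (t + 1) ω i|ℱ t] := by
    intro i
    set P : (Fin d → ℝ) →L[ℝ] ℝ := ContinuousLinearMap.proj (R := ℝ) (φ := fun _ : Fin d => ℝ) i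
    refine ae_eq_condExp_of_forall_setIntegral_eq hm
      ((aux_memℒp_apply (hy_L2 (t + 1)) i).integrable one_le_two)
      (fun s _ _ => ((aux_memℒp_apply hZa2 i).integrable one_le_two).integrableOn)
      (fun s hs hμs => ?_) ?_
    · have hs0 : MeasurableSet s := hm s hs
      have h1 : ∫ x in s, Z.mulVec (a (t + 1) x) i ∂μ
          = P (∫ x in s, Z.mulVec (a (t + 1) x) ∂μ) :=
        P.integral_comp_comm hZa1.integrableOn
      have h2 : ∫ x in s, Z.mulVec (a (t + 1) x) ∂μ = ∫ x in s, (μ[y (t + 1)|ℱ t]) x ∂μ :=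
        integral_congr_ae (ae_restrict_of_ae hcondy.symm)
      have h3 : ∫ x in s, (μ[y (t + 1)|ℱ t]) x ∂μ = ∫ x in s, y (t + 1) x ∂μ :=
        setIntegral_condExp hm hy1 hs
      have h4 : P (∫ x in s, y (t + 1) x ∂μ) = ∫ x in s, y (t + 1) x i ∂μ :=
        (P.integral_comp_comm hy1.integrableOn).symm
      rw [h1, h2, h3, ← h4]
    · exact ((measurable_pi_apply i).comp (aux_measurable_mulVec Z hameas)
        ).stronglyMeasurable.aestronglyMeasurable
  -- conditional expectation of v_{t+1} components vanishes
  have hcond0 : ∀ i, μ[fun ω => v (t + 1) ω i|ℱ t] =ᵐ[μ] 0 := by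
    intro i
    have heq : (fun ω => v (t + 1) ω i)
        = fun ω => y (t + 1) ω i - Z.mulVec (a (t + 1) ω) i := by
      funext ω; rw [hv]; rfl
    have hZai : Integrable (fun ω => Z.mulVec (a (t + 1) ω) i) μ :=
      (aux_memℒp_apply hZa2 i).integrable one_le_two
    have hyi : Integrable (fun ω => y (t + 1) ω i) μ :=
      (aux_memℒp_apply (hy_L2 (t + 1)) i).integrable one_le_two
    have hsub := condExp_sub (m := ℱ t) (μ := μ) hyi hZai
    have hfix : μ[fun ω => Z.mulVec (a (t + 1) ω) i|ℱ t]
        = fun ω => Z.mulVec (a (t + 1) ω) i :=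
      condExp_of_stronglyMeasurable hm
        ((measurable_pi_apply i).comp (aux_measurable_mulVec Z hameas)).stronglyMeasurable hZai
    rw [heq]
    have : (fun ω => y (t + 1) ω i - Z.mulVec (a (t + 1) ω) i)
        = (fun ω => y (t + 1) ω i) - fun ω => Z.mulVec (a (t + 1) ω) i := rfl
    rw [this]
    refine hsub.trans ?_
    filter_upwards [hcondyi i] with ω hω
    simp [Pi.sub_apply, hfix, ← hω]
  -- cross terms vanish
  have hcross : ∀ i j, ∫ ω, v (t + 1) ω i * w ω j ∂μ = 0 := by
    intro i j
    have hwm : StronglyMeasurable[ℱ t] (fun ω => w ω j) :=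
      ((measurable_pi_apply j).comp hwmeas).stronglyMeasurable
    have hprod : Integrable ((fun ω => w ω j) * fun ω => v (t + 1) ω i) μ := hwv j i
    have hvi : Integrable (fun ω => v (t + 1) ω i) μ := (hvL2 i).integrable one_le_two
    have hpull := condExp_mul_of_stronglyMeasurable_left hwm hprod hvi
    have hzero : μ[(fun ω => w ω j) * fun ω => v (t + 1) ω i|ℱ t] =ᵐ[μ] 0 := by
      refine hpull.trans ?_
      filter_upwards [hcond0 i] with ω hω
      simp [Pi.mul_apply, hω]
    have h1 : ∫ ω, v (t + 1) ω i * w ω j ∂μ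
        = ∫ ω, ((fun ω => w ω j) * fun ω => v (t + 1) ω i) ω ∂μ := by
      congr 1; funext ω; simp [Pi.mul_apply, mul_comm]
    rw [h1, ← integral_condExp hm (f := (fun ω => w ω j) * fun ω => v (t + 1) ω i), integral_congr_ae hzero]
    simp
  -- the main variance term
  have hBB : ∀ i j, ∫ ω, v (t + 1) ω i * v (t + 1) ω j ∂μ = F i j := by
    intro i j
    rw [← integral_condExp hm (f := fun ω => v (t + 1) ω i * v (t + 1) ω j), integral_congr_ae (hF i j)]
    simp
  -- the quadratic form term
  set M : Matrix (Fin p) (Fin p) ℝ :=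
    Matrix.of fun k l => ∫ ω, (a (t + 1) ω k - a' (t + 1) ω k)
      * (a (t + 1) ω l - a' (t + 1) ω l) ∂μ with hMdef
  have hEE : ∀ i j, ∫ ω, w ω i * w ω j ∂μ = (Z * M * Zᵀ) i j := by
    intro i j
    have hexp : (fun ω => w ω i * w ω j)
        = fun ω => ∑ k : Fin p, ∑ l : Fin p, (Z i k * Z j l) * (δ ω k * δ ω l) := by
      funext ω
      simp only [hwdef, Matrix.mulVec, dotProduct, Finset.sum_mul_sum]
      exact Finset.sum_congr rfl fun k _ => Finset.sum_congr rfl fun l _ => by ring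
    rw [hexp]
    rw [integral_finset_sum _ (fun k _ => integrable_finset_sum _
      (fun l _ => (hδδ k l).const_mul _))]
    have hstep : ∀ k : Fin p, ∫ ω, ∑ l : Fin p, (Z i k * Z j l) * (δ ω k * δ ω l) ∂μ
        = ∑ l : Fin p, (Z i k * Z j l) * ∫ ω, δ ω k * δ ω l ∂μ := by
      intro k
      rw [integral_finset_sum _ (fun l _ => (hδδ k l).const_mul _)]
      exact Finset.sum_congr rfl fun l _ => integral_const_mul _ _
    simp only [hstep]
    simp only [Matrix.mul_apply, Matrix.transpose_apply, hMdef, Matrix.of_apply]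
    rw [Finset.sum_comm]
    refine Finset.sum_congr rfl fun l _ => ?_
    rw [Finset.sum_mul]
    refine Finset.sum_congr rfl fun k _ => ?_
    have : ∫ ω, δ ω k * δ ω l ∂μ
        = ∫ ω, (a (t + 1) ω k - a' (t + 1) ω k) * (a (t + 1) ω l - a' (t + 1) ω l) ∂μ := rfl
    rw [this]; ring
  -- per-entry identity
  have hentry : ∀ i j, ∫ ω, v' (t + 1) ω i * v' (t + 1) ω j ∂μ
      = F i j + (Z * M * Zᵀ) i j := by
    intro i j
    have hsplit : (fun ω => v' (t + 1) ω i * v' (t + 1) ω j)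
        = fun ω => (v (t + 1) ω i * v (t + 1) ω j + v (t + 1) ω i * w ω j)
          + (w ω i * v (t + 1) ω j + w ω i * w ω j) := by
      funext ω
      rw [hdecomp ω]
      simp only [Pi.add_apply]
      ring
    have h1 : Integrable (fun ω => v (t + 1) ω i * v (t + 1) ω j + v (t + 1) ω i * w ω j) μ :=
      (hvv i j).add (hvw i j)
    have h2 : Integrable (fun ω => w ω i * v (t + 1) ω j + w ω i * w ω j) μ :=
      (hwv i j).add (hww i j)
    rw [hsplit, integral_add h1 h2, integral_add (hvv i j) (hvw i j),
      integral_add (hwv i j) (hww i j)]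
    have hwv0 : ∫ ω, w ω i * v (t + 1) ω j ∂μ = 0 := by
      rw [show (fun ω => w ω i * v (t + 1) ω j) = fun ω => v (t + 1) ω j * w ω i from
        funext fun ω => mul_comm _ _]
      exact hcross j i
    rw [hBB i j, hcross i j, hwv0, hEE i j]
    ring
  -- conclude
  ext i j
  simp only [Matrix.sub_apply, Matrix.add_apply, Matrix.of_apply]
  rw [hentry i j]
end
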